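/- arXiv:2211.16134 — 8 statements merged into one kernel-verified Lean document; each statement's English description precedes it below -/
import Mathlib

section
/- Let k be a commutative noetherian ring, A a finitely generated commutative k-algebra, and G a finite group acting on A by k-algebra automorphisms. Then the subalgebra A^G of G-invariants is a finitely generated k-algebra. -/
/-- The subalgebra of `G`-invariants of a `k`-algebra `A`,
where `G` acts on `A` by `k`-algebra automorphisms. -/
def invariantSubalgebra (k A G : Type*) [CommRing k] [CommRing A] [Algebra k A]
    [Group G] [MulSemiringAction G A] [SMulCommClass G k A] : Subalgebra k A where
  carrier := {a | ∀ g : G, g • a = a}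
  mul_mem' := fun {a b} ha hb g => by rw [smul_mul', ha g, hb g]
  add_mem' := fun {a b} ha hb g => by rw [smul_add, ha g, hb g]
  algebraMap_mem' := fun r g => by
    rw [Algebra.algebraMap_eq_smul_one, smul_comm, smul_one]

theorem invariants_isIntegral (k A G : Type*) [CommRing k]
    [CommRing A] [Algebra k A]
    [Group G] [Finite G] [MulSemiringAction G A] [SMulCommClass G k A] (x : A) :
    IsIntegral (invariantSubalgebra k A G) x := by
  cases nonempty_fintype G
  set B := invariantSubalgebra k A G
  refine ⟨(prodXSubSMul G A x).toSubring B.toSubring (show ((prodXSubSMul G A x).coeffs : Set A) ⊆ (B.toSubring : Set A) from fun c hc g => ?_), ?_, ?_⟩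
  · obtain ⟨n, _, rfl⟩ := Polynomial.mem_coeffs_iff.mp hc
    exact prodXSubSMul.coeff G A x g n
  · rw [Polynomial.monic_toSubring]
    exact prodXSubSMul.monic G A x
  · show Polynomial.eval₂ (Subring.subtype B.toSubring) x _ = 0
    rw [← prodXSubSMul.eval G A x, Polynomial.eval₂_eq_eval_map, Polynomial.map_toSubring]

/-- **Noether's theorem on invariants.** If `k` is a commutative noetherian ring, `A` a
finitely generated commutative `k`-algebra and `G` a finite group acting on `A` by
`k`-algebra automorphisms, then the `k`-algebra `A^G` of invariants is finitely generated. -/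
theorem invariants_finiteType (k A G : Type*) [CommRing k] [IsNoetherianRing k]
    [CommRing A] [Algebra k A] (hA : Algebra.FiniteType k A)
    [Group G] [Finite G] [MulSemiringAction G A] [SMulCommClass G k A] :
    Algebra.FiniteType k (invariantSubalgebra k A G) := by
  set B := invariantSubalgebra k A G
  have hint : Algebra.IsIntegral B A := ⟨fun x => invariants_isIntegral k A G x⟩
  have hft : Algebra.FiniteType B A := by
    haveI := hA
    exact Algebra.FiniteType.of_restrictScalars_finiteType k B A
  have hfin : Module.Finite B A := Algebra.IsIntegral.finite
  refine ⟨fg_of_fg_of_fg k B A hA.out hfin.fg_top ?_⟩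
  exact Subtype.val_injective
end

section
/- Let k be a commutative noetherian ring, A a finitely generated commutative k-algebra with an action of a finite group G by k-algebra automorphisms, and V a finitely generated A-module with a k-linear G-action satisfying g•(a·v) = (g•a)·(g•v) for all g ∈ G, a ∈ A, v ∈ V. Then V^G is a finitely generated module over A^G. -/
/-- The subalgebra of `G`-invariant elements of `A`. -/
def fixedSubalgebra (k A G : Type*) [CommSemiring k] [CommSemiring A] [Algebra k A]
    [Group G] [MulSemiringAction G A] [SMulCommClass G k A] : Subalgebra k A where
  carrier := {a | ∀ g : G, g • a = a}
  mul_mem' {a b} ha hb g := by rw [smul_mul', ha g, hb g]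
  add_mem' {a b} ha hb g := by rw [smul_add, ha g, hb g]
  algebraMap_mem' c g := by
    rw [Algebra.algebraMap_eq_smul_one, smul_comm, smul_one]

/-- **Noether's theorem for invariants of modules.** Let `k` be a commutative noetherian ring,
`A` a finitely generated commutative `k`-algebra with an action of a finite group `G` by
`k`-algebra automorphisms, and `V` a finitely generated `A`-module with a `k`-linear `G`-action
which is semilinear over the action on `A` (`g • (a • v) = (g • a) • (g • v)`).  Then the
invariants `V^G` form a finitely generated module over the invariant algebra `A^G`:
there are finitely many invariant elements of `V` such that every invariant element of `V`
is a linear combination of them with invariant coefficients. -/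
theorem invariants_module_finite (k A G V : Type*) [CommRing k] [IsNoetherianRing k]
    [CommRing A] [Algebra k A] (hA : Algebra.FiniteType k A)
    [Group G] [Finite G] [MulSemiringAction G A] [SMulCommClass G k A]
    [AddCommGroup V] [Module k V] [Module A V] [IsScalarTower k A V]
    [DistribMulAction G V] [SMulCommClass G k V]
    (hV : Module.Finite A V)
    (hcompat : ∀ (g : G) (a : A) (v : V), g • (a • v) = (g • a) • (g • v)) :
    ∃ s : Finset V, (∀ x ∈ s, ∀ g : G, g • x = x) ∧
      ∀ v : V, (∀ g : G, g • v = v) →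
        ∃ c : V → A, (∀ x, ∀ g : G, g • c x = c x) ∧ v = ∑ x ∈ s, c x • x := by
  classical
  cases nonempty_fintype G
  haveI := hA
  haveI := hV
  set B := fixedSubalgebra k A G with hB
  -- A is integral over B
  haveI hint : Algebra.IsIntegral B A := by
    constructor
    intro a
    have hcoeff : (↑(prodXSubSMul G A a).coeffs : Set A) ⊆ (B.toSubring : Set A) := by
      intro x hx
      obtain ⟨n, _, rfl⟩ := Polynomial.mem_coeffs_iff.mp hx
      exact fun g => prodXSubSMul.coeff G A a g n
    refine ⟨(prodXSubSMul G A a).toSubring B.toSubring hcoeff, ?_, ?_⟩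
    · exact (Polynomial.monic_toSubring _ _ _).mpr (prodXSubSMul.monic G A a)
    · have h1 : Polynomial.eval₂ (algebraMap (↥B) A) a
          ((prodXSubSMul G A a).toSubring B.toSubring hcoeff)
          = Polynomial.eval a
            (((prodXSubSMul G A a).toSubring B.toSubring hcoeff).map B.toSubring.subtype) := by
        rw [Polynomial.eval₂_eq_eval_map]; rfl
      rw [h1, Polynomial.map_toSubring]
      exact prodXSubSMul.eval G A a
  haveI hftBA : Algebra.FiniteType B A :=
    Algebra.FiniteType.of_restrictScalars_finiteType (R := k) (S := B) (A := A)
  haveI hfinBA : Module.Finite B A := Algebra.IsIntegral.finite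
  -- B is a noetherian ring by Artin--Tate
  have hfgB : (⊤ : Subalgebra k B).FG := by
    refine fg_of_fg_of_fg (A := k) (B := B) (C := A) hA.1 hfinBA.1 ?_
    exact fun x y h => Subtype.ext h
  haveI : Algebra.FiniteType k B := ⟨hfgB⟩
  haveI : IsNoetherianRing B := Algebra.FiniteType.isNoetherianRing k B
  haveI : Module.Finite B V := Module.Finite.trans A V
  haveI : IsNoetherian B V := isNoetherian_of_isNoetherianRing_of_finite B V
  -- the invariants form a B-submodule of V
  let W : Submodule B V :=
    { carrier := {v | ∀ g : G, g • v = v}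
      add_mem' := fun {a b} ha hb g => by rw [smul_add, ha g, hb g]
      zero_mem' := fun g => smul_zero g
      smul_mem' := fun c {x} hx g => by
        show g • ((c : A) • x) = (c : A) • x
        rw [hcompat, c.2 g, hx g] }
  obtain ⟨s, hs⟩ := IsNoetherian.noetherian W
  refine ⟨s, ?_, ?_⟩
  · intro x hx g
    have hxW : x ∈ W := by rw [← hs]; exact Submodule.subset_span hx
    exact hxW g
  · intro v hv
    have hvW : v ∈ Submodule.span B (↑s : Set V) := by rw [hs]; exact hv
    obtain ⟨f, -, hf⟩ := Submodule.mem_span_finset.mp hvW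
    exact ⟨fun x => (f x : A), fun x g => (f x).2 g, by rw [← hf]; exact Finset.sum_congr rfl fun x _ => rfl⟩
end

section
/- Let K → L be a faithfully flat morphism of commutative rings and A a K-algebra. If the L-algebra A ⊗_K L is left noetherian, then A is left noetherian. -/
open TensorProduct

/-- For a faithfully flat `K`-algebra `L`, the map `m ↦ 1 ⊗ m` is injective at zero. -/
lemma eq_zero_of_one_tmul_eq_zero
    (K L : Type*) [CommRing K] [CommRing L] [Algebra K L] [Module.FaithfullyFlat K L]
    {M : Type*} [AddCommGroup M] [Module K M] (m : M)
    (h : (1 : L) ⊗ₜ[K] m = 0) : m = 0 := by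
  by_contra hm
  set N : Submodule K M := Submodule.span K {m} with hN
  have hmN : m ∈ N := Submodule.mem_span_singleton_self m
  have : Nontrivial N := by
    refine ⟨⟨m, hmN⟩, 0, fun hc => hm ?_⟩
    simpa using congrArg Subtype.val hc
  have hnt : Nontrivial (L ⊗[K] N) :=
    Module.FaithfullyFlat.lTensor_nontrivial K L N
  have hinj : Function.Injective (LinearMap.lTensor L N.subtype) :=
    Module.Flat.lTensor_preserves_injective_linearMap N.subtype N.injective_subtype
  have hlm : ∀ l : L, l ⊗ₜ[K] m = 0 := by
    intro l
    have h1 : l ⊗ₜ[K] m = l • ((1 : L) ⊗ₜ[K] m) := by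
      rw [smul_tmul', smul_eq_mul, mul_one]
    rw [h1, h, smul_zero]
  have hzero : ∀ x : L ⊗[K] N, LinearMap.lTensor L N.subtype x = 0 := by
    intro x
    induction x using TensorProduct.induction_on with
    | zero => simp
    | tmul l n =>
      obtain ⟨k, hk⟩ := Submodule.mem_span_singleton.mp n.2
      have hn : (N.subtype n : M) = k • m := by simpa using hk.symm
      have h2 : LinearMap.lTensor L N.subtype (l ⊗ₜ n) = l ⊗ₜ[K] (k • m) := by
        simp [hn]
      rw [h2, tmul_smul, hlm l, smul_zero]
    | add x y hx hy => rw [map_add, hx, hy, add_zero]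
  obtain ⟨a, b, hab⟩ := hnt
  exact hab (hinj (by rw [hzero a, hzero b]))

open TensorProduct in
/-- **Faithfully flat descent of noetherianity.** Let `K → L` be a faithfully flat morphism of
commutative rings and `A` a `K`-algebra.  If the `L`-algebra `A ⊗_K L` is left noetherian,
then `A` is left noetherian. -/
theorem isNoetherianRing_of_faithfullyFlat_baseChange
    (K L A : Type*) [CommRing K] [CommRing L] [Algebra K L] [Module.FaithfullyFlat K L]
    [Ring A] [Algebra K A] (h : IsNoetherianRing (A ⊗[K] L)) :
    IsNoetherianRing A := by
  classical
  let F : Submodule A A → Submodule (A ⊗[K] L) (A ⊗[K] L) := fun I =>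
    Submodule.span (A ⊗[K] L) ((fun a : A => a ⊗ₜ[K] (1 : L)) '' (I : Set A))
  have key : ∀ (I : Submodule A A) (x : A), x ⊗ₜ[K] (1 : L) ∈ F I → x ∈ I := by
    intro I x hx
    let I' : Submodule K A := I.restrictScalars K
    let f : (I' ⊗[K] L) →ₗ[K] (A ⊗[K] L) := LinearMap.rTensor L I'.subtype
    have hmul : ∀ (c : A ⊗[K] L) (y : A ⊗[K] L),
        y ∈ LinearMap.range f → c * y ∈ LinearMap.range f := by
      intro c y hy
      obtain ⟨z, rfl⟩ := hy
      induction c using TensorProduct.induction_on with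
      | zero => exact ⟨0, by simp⟩
      | add c₁ c₂ h₁ h₂ =>
        obtain ⟨z₁, hz₁⟩ := h₁; obtain ⟨z₂, hz₂⟩ := h₂
        exact ⟨z₁ + z₂, by rw [map_add, hz₁, hz₂, add_mul]⟩
      | tmul a l =>
        induction z using TensorProduct.induction_on with
        | zero => exact ⟨0, by simp⟩
        | add z₁ z₂ h₁ h₂ =>
          obtain ⟨w₁, hw₁⟩ := h₁; obtain ⟨w₂, hw₂⟩ := h₂
          exact ⟨w₁ + w₂, by rw [map_add, map_add, mul_add, hw₁, hw₂]⟩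
        | tmul i l' =>
          refine ⟨(⟨a * (i : A), I.smul_mem a i.2⟩ : I') ⊗ₜ[K] (l * l'), ?_⟩
          have : f ((⟨a * (i : A), I.smul_mem a i.2⟩ : I') ⊗ₜ[K] (l * l'))
              = (a * (i : A)) ⊗ₜ[K] (l * l') := rfl
          rw [this]
          have hfz : f (i ⊗ₜ[K] l') = (i : A) ⊗ₜ[K] l' := rfl
          rw [hfz, Algebra.TensorProduct.tmul_mul_tmul]
    let R' : Submodule (A ⊗[K] L) (A ⊗[K] L) :=
      { carrier := LinearMap.range f
        add_mem' := fun ha hb => by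
          obtain ⟨za, rfl⟩ := ha; obtain ⟨zb, rfl⟩ := hb
          exact ⟨za + zb, map_add _ _ _⟩
        zero_mem' := ⟨0, map_zero _⟩
        smul_mem' := fun c y hy => hmul c y hy }
    have hFle : F I ≤ R' := by
      refine Submodule.span_le.mpr ?_
      rintro _ ⟨a, ha, rfl⟩
      exact ⟨(⟨a, ha⟩ : I') ⊗ₜ[K] (1 : L), rfl⟩
    obtain ⟨z, hz⟩ := hFle hx
    let q : (A ⊗[K] L) →ₗ[K] ((A ⧸ I) ⊗[K] L) :=
      LinearMap.rTensor L ((I.mkQ).restrictScalars K)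
    have hqf : ∀ w : I' ⊗[K] L, q (f w) = 0 := by
      intro w
      induction w using TensorProduct.induction_on with
      | zero => simp
      | add w₁ w₂ h₁ h₂ => rw [map_add, map_add, h₁, h₂, add_zero]
      | tmul i l =>
        have h1 : f (i ⊗ₜ[K] l) = (i : A) ⊗ₜ[K] l := rfl
        have h2 : q ((i : A) ⊗ₜ[K] l) = (Submodule.Quotient.mk (i : A) : A ⧸ I) ⊗ₜ[K] l := rfl
        rw [h1, h2, show (Submodule.Quotient.mk (i : A) : A ⧸ I) = 0 from
          (Submodule.Quotient.mk_eq_zero I).mpr i.2, zero_tmul]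
    have hq : q (x ⊗ₜ[K] (1 : L)) = 0 := by rw [← hz]; exact hqf z
    have hq' : (Submodule.Quotient.mk x : A ⧸ I) ⊗ₜ[K] (1 : L) = 0 := by
      have : q (x ⊗ₜ[K] (1 : L)) = (Submodule.Quotient.mk x : A ⧸ I) ⊗ₜ[K] (1 : L) := rfl
      rw [← this, hq]
    have hflip : (1 : L) ⊗ₜ[K] (Submodule.Quotient.mk x : A ⧸ I) = 0 := by
      have := congrArg (TensorProduct.comm K (A ⧸ I) L) hq'
      simpa using this
    exact (Submodule.Quotient.mk_eq_zero I).mp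
      (eq_zero_of_one_tmul_eq_zero K L (M := A ⧸ I) _ hflip)
  have hle : ∀ I J : Submodule A A, F I ≤ F J ↔ I ≤ J := by
    intro I J
    constructor
    · intro hFIJ x hxI
      exact key J x (hFIJ (Submodule.subset_span ⟨x, hxI, rfl⟩))
    · intro hIJ
      exact Submodule.span_mono (Set.image_mono hIJ)
  let e : Submodule A A ↪o Submodule (A ⊗[K] L) (A ⊗[K] L) :=
    OrderEmbedding.ofMapLEIff F hle
  rw [isNoetherianRing_iff, isNoetherian_iff'] at h ⊢
  exact e.wellFoundedGT
end

section
/- Let k be a commutative ring of characteristic zero and p a prime number such that p becomes invertible in the quotient k/k_tor, where k_tor is the ℤ-torsion ideal of k, and such that p^i·(1 − p·x) = 0 for some x ∈ k and i ∈ ℕ. Then the element p^i·x^i is idempotent in k, and k is isomorphic to the product of k/(p^i x^i), a ring whose characteristic is a power of p, and k/(1 − p^i x^i), a ring in which p is invertible. -/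
/-- The ideal of `ℤ`-torsion elements of a commutative ring. -/
def torsionIdeal (k : Type*) [CommRing k] : Ideal k where
  carrier := {x | ∃ n : ℕ, 0 < n ∧ n • x = 0}
  add_mem' := fun {a b} ha hb => by
    obtain ⟨n, hn, ha⟩ := ha
    obtain ⟨m, hm, hb⟩ := hb
    exact ⟨n * m, Nat.mul_pos hn hm, by
      rw [mul_comm, mul_smul, smul_add, ha, zero_add, smul_comm, hb, smul_zero]⟩
  zero_mem' := ⟨1, one_pos, smul_zero 1⟩
  smul_mem' := fun c {x} hx => by
    obtain ⟨n, hn, hx⟩ := hx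
    exact ⟨n, hn, by rw [smul_eq_mul, mul_comm, ← smul_mul_assoc, hx, zero_mul]⟩

/-- Let `k` be a commutative ring of characteristic zero and `p` a prime which becomes
invertible in `k/k_tor` and such that `p^i·(1 − p·x) = 0` for some `x ∈ k`, `i ∈ ℕ`.
Then `e = p^i·x^i` is idempotent, and `k` is isomorphic to the product of `k/(e)`, whose
characteristic is a power of `p`, and `k/(1−e)`, in which `p` is invertible. -/
theorem idempotent_decomposition (k : Type*) [CommRing k] [CharZero k]
    (p : ℕ) (hp : p.Prime)
    (hinv : IsUnit ((p : k ⧸ torsionIdeal k)))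
    (x : k) (i : ℕ) (hx : (p : k) ^ i * (1 - (p : k) * x) = 0) :
    IsIdempotentElem ((p : k) ^ i * x ^ i) ∧
      (∃ j : ℕ, CharP (k ⧸ Ideal.span {(p : k) ^ i * x ^ i}) (p ^ j)) ∧
      IsUnit ((p : k ⧸ Ideal.span {1 - (p : k) ^ i * x ^ i})) ∧
      Nonempty (k ≃+* (k ⧸ Ideal.span {(p : k) ^ i * x ^ i}) ×
        (k ⧸ Ideal.span {1 - (p : k) ^ i * x ^ i})) := by
  set e : k := (p : k) ^ i * x ^ i with he
  -- basic identity: p^i * (p*x) = p^i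
  have h1 : (p : k) ^ i * ((p : k) * x) = (p : k) ^ i := by
    have := hx
    ring_nf at this ⊢
    linear_combination -this
  have key : ∀ n : ℕ, (p : k) ^ i * ((p : k) * x) ^ n = (p : k) ^ i := by
    intro n
    induction n with
    | zero => simp
    | succ n ih => rw [pow_succ, ← mul_assoc, ih, h1]
  have hee : e = ((p : k) * x) ^ i := by rw [he, mul_pow]
  have hidem : IsIdempotentElem e := by
    show e * e = e
    calc e * e = (p : k) ^ i * ((p : k) * x) ^ i * x ^ i := by rw [hee]; ring
    _ = e := by rw [key]
  refine ⟨hidem, ?_, ?_, ?_⟩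
  · -- characteristic of k ⧸ (e) is a power of p
    have hpi : ((p : k ⧸ Ideal.span {e}) ^ i : k ⧸ Ideal.span {e}) = 0 := by
      have : (p : k) ^ i = (p : k) ^ i * e := by
        conv_lhs => rw [← key i, ← hee]
      have he0 : (Ideal.Quotient.mk (Ideal.span {e}) e) = 0 := by
        rw [Ideal.Quotient.eq_zero_iff_mem]
        exact Ideal.subset_span rfl
      have := congrArg (Ideal.Quotient.mk (Ideal.span {e})) this
      push_cast at this ⊢
      rw [map_mul, he0, mul_zero] at this
      exact_mod_cast this
    have hdvd : ringChar (k ⧸ Ideal.span {e}) ∣ p ^ i := by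
      apply ringChar.dvd
      exact_mod_cast hpi
    obtain ⟨j, _, hj⟩ := (Nat.dvd_prime_pow hp).mp hdvd
    exact ⟨j, hj ▸ ringChar.charP _⟩
  · -- p is a unit in k ⧸ (1 - e)
    set I := Ideal.span {1 - e}
    have he1 : (Ideal.Quotient.mk I e) = 1 := by
      have : Ideal.Quotient.mk I (1 - e) = 0 :=
        Ideal.Quotient.eq_zero_iff_mem.mpr (Ideal.subset_span rfl)
      rw [map_sub, map_one, sub_eq_zero] at this
      exact this.symm
    -- p^i is a unit in the quotient
    have hpiu : IsUnit ((p : k ⧸ I) ^ i) := by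
      refine IsUnit.of_mul_eq_one (Ideal.Quotient.mk I (x ^ i)) ?_
      have : Ideal.Quotient.mk I ((p : k) ^ i * x ^ i) = 1 := he1
      rw [map_mul] at this
      simpa using this
    -- from hx : p^i * (1 - p*x) = 0, and p^i unit, get p * x = 1
    have hpx : (p : k ⧸ I) * Ideal.Quotient.mk I x = 1 := by
      have h0 : ((p : k ⧸ I) ^ i) * (1 - (p : k ⧸ I) * Ideal.Quotient.mk I x) = 0 := by
        have := congrArg (Ideal.Quotient.mk I) hx
        push_cast at this ⊢
        simpa using this
      rw [hpiu.mul_right_eq_zero, sub_eq_zero] at h0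
      exact h0.symm
    exact IsUnit.of_mul_eq_one _ hpx
  · -- the ring isomorphism
    have hcop : IsCoprime (Ideal.span {e}) (Ideal.span {1 - e}) := by
      rw [Ideal.isCoprime_span_singleton_iff]
      exact ⟨1, 1, by ring⟩
    have hinf : Ideal.span {e} ⊓ Ideal.span {1 - e} = ⊥ := by
      rw [Ideal.inf_eq_mul_of_isCoprime hcop, Ideal.span_singleton_mul_span_singleton]
      have : e * (1 - e) = 0 := by
        have := hidem
        unfold IsIdempotentElem at this
        linear_combination -this
      rw [this, Ideal.span_singleton_eq_bot.mpr rfl]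
    exact ⟨(RingEquiv.quotientBot k).symm.trans
      ((Ideal.quotEquivOfEq hinf.symm).trans
        (Ideal.quotientInfEquivQuotientProd _ _ hcop))⟩
end

section
/- Let R be a commutative ring, T ⊆ R a multiplicative subset, and d ∈ ℕ. Then T^[d] := {t^[d] | t ∈ T} is a multiplicative subset of the commutative ring Γ^d(R), and there is a ring isomorphism Γ^d(R[T⁻¹]) ≅ Γ^d(R)[(T^[d])⁻¹]. -/
open MvPolynomial

/-- The ideal of relations defining the divided power algebra `Γ*_k(V)`:
`v^[0] = 1`, `(c•v)^[n] = cⁿ v^[n]`, `v^[n]·v^[m] = ((n+m)!/(n!m!)) v^[n+m]`,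
`(v+w)^[n] = ∑_{i+j=n} v^[i] w^[j]`, where the variable `X (v, n)` stands for `v^[n]`. -/
noncomputable def dpRelations (k V : Type*) [CommRing k] [AddCommGroup V] [Module k V] :
    Ideal (MvPolynomial (V × ℕ) k) :=
  Ideal.span
    ({q | ∃ v : V, q = X (v, 0) - 1} ∪
     {q | ∃ (c : k) (v : V) (n : ℕ), q = X (c • v, n) - C (c ^ n) * X (v, n)} ∪
     {q | ∃ (v : V) (n m : ℕ),
        q = X (v, n) * X (v, m) - C ((n + m).choose n : k) * X (v, n + m)} ∪
     {q | ∃ (v w : V) (n : ℕ),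
        q = X (v + w, n) - ∑ ij ∈ Finset.HasAntidiagonal.antidiagonal n, X (v, ij.1) * X (w, ij.2)})

/-- The divided power algebra `Γ*_k(V)` of a `k`-module `V`. -/
abbrev DividedPowerAlg (k V : Type*) [CommRing k] [AddCommGroup V] [Module k V] :=
  MvPolynomial (V × ℕ) k ⧸ dpRelations k V

/-- The divided power `v^[n] ∈ Γ*_k(V)`. -/
noncomputable def dp (k : Type*) {V : Type*} [CommRing k] [AddCommGroup V] [Module k V]
    (v : V) (n : ℕ) : DividedPowerAlg k V :=
  Ideal.Quotient.mk _ (X (v, n))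

/-- The `d`-th divided power module `Γ^d_k(V)`: the degree-`d` homogeneous component of
`Γ*_k(V)`, i.e. the span of the products `v₁^[i₁] ⋯ v_r^[i_r]` with `i₁ + ⋯ + i_r = d`. -/
noncomputable def gammaDP (k : Type*) (V : Type*) [CommRing k] [AddCommGroup V] [Module k V] (d : ℕ) :
    Submodule k (DividedPowerAlg k V) :=
  Submodule.span k {x | ∃ (r : ℕ) (f : Fin r → V) (g : Fin r → ℕ),
    (∑ a, g a) = d ∧ x = ∏ a, dp k (f a) (g a)}

open Classical in
/-- `ι : Γ → Γ*_k(A)` exhibits the ring `Γ` as the `d`-th divided power `Γ^d_k(A)` of the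
`k`-algebra `A`, endowed with its canonical ring structure (coming from the lax monoidal
structure of `Γ^d`): `ι` is an injective additive map with image `Γ^d_k(A)`, the unit of `Γ`
corresponds to `1^[d]`, and multiplication is given on generators by
`(∏ₐ xₐ^[iₐ])·(∏_b y_b^[j_b]) = ∑_{(m_{ab})} ∏_{a,b} (xₐ·y_b)^[m_{ab}]`, the sum being over
matrices of nonnegative integers with row sums `(iₐ)` and column sums `(j_b)`. -/
def IsCanonicalGammaRing (k A : Type*) [CommRing k] [Ring A] [Module k A] (d : ℕ)
    (Γ : Type*) [Ring Γ] (ι : Γ →+ DividedPowerAlg k A) : Prop :=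
  Function.Injective ι ∧
  Set.range ι = (gammaDP k A d : Set (DividedPowerAlg k A)) ∧
  ι 1 = dp k (1 : A) d ∧
  ∀ (r s : ℕ) (x : Fin r → A) (ix : Fin r → ℕ) (y : Fin s → A) (iy : Fin s → ℕ),
    (∑ a, ix a) = d → (∑ b, iy b) = d →
    ∀ P Q : Γ, ι P = (∏ a, dp k (x a) (ix a)) → ι Q = (∏ b, dp k (y b) (iy b)) →
      ι (P * Q) = ∑ m : Fin r → Fin s → Fin (d + 1),
        if (∀ a, (∑ b, (m a b : ℕ)) = ix a) ∧ (∀ b, (∑ a, (m a b : ℕ)) = iy b)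
          then ∏ a, ∏ b, dp k (x a * y b) (m a b : ℕ) else 0


set_option maxHeartbeats 1000000
set_option synthInstance.maxHeartbeats 200000

namespace GammaLocAux

section Functorial
variable {V W : Type*} [AddCommGroup V] [AddCommGroup W] [Module ℤ V] [Module ℤ W]
variable (f : V →ₗ[ℤ] W)

/-- The variable renaming induced by `f`. -/
def vren : V × ℕ → W × ℕ := fun vn => (f vn.1, vn.2)

theorem rename_mem_dpRelations
    {x : MvPolynomial (V × ℕ) ℤ} (hx : x ∈ dpRelations ℤ V) :
    rename (vren f) x ∈ dpRelations ℤ W := by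
  have h1 : rename (vren f) x ∈ Ideal.map
      (rename (vren f) : MvPolynomial (V × ℕ) ℤ →ₐ[ℤ] _).toRingHom
      (dpRelations ℤ V) := Ideal.mem_map_of_mem _ hx
  rw [dpRelations, Ideal.map_span] at h1
  refine Ideal.span_le.mpr ?_ h1
  rintro y ⟨s, hs, rfl⟩
  rcases hs with ((⟨v, rfl⟩ | ⟨c, v, n, rfl⟩) | ⟨v, n, m, rfl⟩) | ⟨v, w, n, rfl⟩
  · exact Ideal.subset_span <| Or.inl <| Or.inl <| Or.inl ⟨f v, by simp [vren]⟩
  · exact Ideal.subset_span <| Or.inl <| Or.inl <| Or.inr ⟨c, f v, n, by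
      simp [vren]⟩
  · exact Ideal.subset_span <| Or.inl <| Or.inr ⟨f v, n, m, by simp [vren]⟩
  · exact Ideal.subset_span <| Or.inr ⟨f v, f w, n, by simp [vren, map_add f v w]⟩

/-- The ring homomorphism `Γ*(V) → Γ*(W)` induced by an additive map `f : V → W`. -/
noncomputable def dpAlgMap : DividedPowerAlg ℤ V →+* DividedPowerAlg ℤ W :=
  Ideal.Quotient.lift (dpRelations ℤ V)
    ((Ideal.Quotient.mk (dpRelations ℤ W)).comp
      (rename (vren f) : MvPolynomial (V × ℕ) ℤ →ₐ[ℤ] _).toRingHom)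
    (fun a ha => by
      simp only [RingHom.comp_apply]
      rw [Ideal.Quotient.eq_zero_iff_mem]
      exact rename_mem_dpRelations f ha)

theorem dpAlgMap_mk (p : MvPolynomial (V × ℕ) ℤ) :
    dpAlgMap f (Ideal.Quotient.mk _ p) =
      Ideal.Quotient.mk _ (rename (vren f) p) :=
  Ideal.Quotient.lift_mk _ _ _

theorem dpAlgMap_dp (v : V) (n : ℕ) :
    dpAlgMap f (dp ℤ v n) = dp ℤ (f v) n := by
  rw [dp, dpAlgMap_mk]; simp [dp, vren]

theorem dpAlgMap_int_smul (c : ℤ) (x : DividedPowerAlg ℤ V) :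
    dpAlgMap f (c • x) = c • dpAlgMap f x := by
  simpa using map_intCast_smul (dpAlgMap f) ℤ ℤ c x

theorem dpAlgMap_mem_gammaDP (d : ℕ) :
    ∀ x ∈ gammaDP ℤ V d, dpAlgMap f x ∈ gammaDP ℤ W d := by
  have : ∀ x ∈ Submodule.span ℤ {x : DividedPowerAlg ℤ V |
      ∃ (r : ℕ) (vf : Fin r → V) (g : Fin r → ℕ),
        (∑ a, g a) = d ∧ x = ∏ a, dp ℤ (vf a) (g a)},
      dpAlgMap f x ∈ gammaDP ℤ W d := by
    intro x hx'
    induction hx' using Submodule.span_induction with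
    | mem x hxg =>
      obtain ⟨r, vf, g, hsum, rfl⟩ := hxg
      rw [map_prod]
      refine Submodule.subset_span ⟨r, f ∘ vf, g, hsum, ?_⟩
      simp [dpAlgMap_dp]
    | zero => rw [map_zero]; exact Submodule.zero_mem _
    | add x y _ _ ihx ihy => rw [map_add]; exact Submodule.add_mem _ ihx ihy
    | smul c x _ ihx =>
      rw [dpAlgMap_int_smul]
      exact Submodule.smul_mem _ c ihx
  exact fun x hx => this x hx

end Functorial

section Canonical
variable {A : Type*} [CommRing A] {d : ℕ} {Γ : Type*} [CommRing Γ]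
  {ι : Γ →+ DividedPowerAlg ℤ A} (hΓ : IsCanonicalGammaRing ℤ A d Γ ι)

include hΓ

theorem exists_preimage {x : DividedPowerAlg ℤ A} (hx : x ∈ gammaDP ℤ A d) :
    ∃ P, ι P = x := by
  have : x ∈ Set.range ι := by rw [hΓ.2.1]; exact hx
  exact this

theorem mem_range_of_gen {r : ℕ} (v : Fin r → A) (g : Fin r → ℕ) (hsum : ∑ a, g a = d) :
    ∃ P, ι P = ∏ a, dp ℤ (v a) (g a) :=
  exists_preimage hΓ (Submodule.subset_span ⟨r, v, g, hsum, rfl⟩)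

theorem dp_mem_range (x : A) : ∃ P, ι P = dp ℤ x d := by
  obtain ⟨P, hP⟩ := mem_range_of_gen hΓ (fun _ : Fin 1 => x) (fun _ => d) (by simp)
  exact ⟨P, by simpa using hP⟩

theorem eq_zero_of {P : Γ} (h : ι P = 0) : P = 0 :=
  hΓ.1 (by simpa using h)

theorem mul_single_right {r : ℕ} {x : Fin r → A} {ix : Fin r → ℕ} (hix : ∑ a, ix a = d)
    {y : A} {P Q : Γ} (hP : ι P = ∏ a, dp ℤ (x a) (ix a)) (hQ : ι Q = dp ℤ y d) :
    ι (P * Q) = ∏ a, dp ℤ (x a * y) (ix a) := by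
  have key := hΓ.2.2.2 r 1 x ix (fun _ => y) (fun _ => d) hix (by simp) P Q hP
    (by simpa using hQ)
  have hb : ∀ a, ix a ≤ d := fun a =>
    hix ▸ Finset.single_le_sum (fun i _ => Nat.zero_le _) (Finset.mem_univ a)
  set m₀ : Fin r → Fin 1 → Fin (d + 1) :=
    (fun a _ => ⟨ix a, Nat.lt_succ_of_le (hb a)⟩) with hm₀
  rw [key, Fintype.sum_eq_single m₀, if_pos]
  · simp [hm₀]
  · refine ⟨fun a => by simp [hm₀], fun b => by simp [hm₀, hix]⟩
  · intro m hm
    rw [if_neg]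
    rintro ⟨h1, -⟩
    refine hm (funext fun a => funext fun b => ?_)
    have hb0 : b = 0 := Subsingleton.elim _ _
    subst hb0
    exact Fin.ext (by simpa [hm₀] using h1 a)

theorem mul_single_left {s : ℕ} {y : Fin s → A} {iy : Fin s → ℕ} (hiy : ∑ b, iy b = d)
    {x : A} {P Q : Γ} (hP : ι P = dp ℤ x d) (hQ : ι Q = ∏ b, dp ℤ (y b) (iy b)) :
    ι (P * Q) = ∏ b, dp ℤ (x * y b) (iy b) := by
  have key := hΓ.2.2.2 1 s (fun _ => x) (fun _ => d) y iy (by simp) hiy P Q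
    (by simpa using hP) hQ
  have hb : ∀ b, iy b ≤ d := fun b =>
    hiy ▸ Finset.single_le_sum (fun i _ => Nat.zero_le _) (Finset.mem_univ b)
  set m₀ : Fin 1 → Fin s → Fin (d + 1) :=
    (fun _ b => ⟨iy b, Nat.lt_succ_of_le (hb b)⟩) with hm₀
  rw [key, Fintype.sum_eq_single m₀, if_pos]
  · simp [hm₀]
  · refine ⟨fun a => by simp [hm₀, hiy], fun b => by simp [hm₀]⟩
  · intro m hm
    rw [if_neg]
    rintro ⟨-, h2⟩
    refine hm (funext fun a => funext fun b => ?_)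
    have ha0 : a = 0 := Subsingleton.elim _ _
    subst ha0
    exact Fin.ext (by simpa [hm₀] using h2 b)

theorem dp_mul_dp {x y : A} {P Q : Γ} (hP : ι P = dp ℤ x d) (hQ : ι Q = dp ℤ y d) :
    ι (P * Q) = dp ℤ (x * y) d := by
  have := mul_single_right (ι := ι) hΓ (r := 1) (x := fun _ => x) (ix := fun _ => d)
    (by simp) (by simpa using hP) hQ
  simpa using this

theorem hom_ext {M : Type*} [AddCommGroup M] (f g : Γ →+ M)
    (h : ∀ (P : Γ) (r : ℕ) (v : Fin r → A) (iv : Fin r → ℕ), (∑ a, iv a) = d →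
      ι P = ∏ a, dp ℤ (v a) (iv a) → f P = g P) (P : Γ) : f P = g P := by
  have hmem : ι P ∈ Submodule.span ℤ {x : DividedPowerAlg ℤ A |
      ∃ (r : ℕ) (vf : Fin r → A) (gg : Fin r → ℕ),
        (∑ a, gg a) = d ∧ x = ∏ a, dp ℤ (vf a) (gg a)} := by
    have : ι P ∈ Set.range ι := ⟨P, rfl⟩
    rw [hΓ.2.1] at this
    exact this
  have main : ∀ (x : DividedPowerAlg ℤ A), x ∈ Submodule.span ℤ {x : DividedPowerAlg ℤ A |
      ∃ (r : ℕ) (vf : Fin r → A) (gg : Fin r → ℕ),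
        (∑ a, gg a) = d ∧ x = ∏ a, dp ℤ (vf a) (gg a)} →
      ∀ P : Γ, ι P = x → f P = g P := by
    intro x hx
    induction hx using Submodule.span_induction with
    | mem x hxg =>
      rintro P hP
      obtain ⟨r, vf, gg, hsum, rfl⟩ := hxg
      exact h P r vf gg hsum hP
    | zero =>
      intro P hP
      have : P = 0 := eq_zero_of hΓ hP
      subst this; simp
    | add x y hx hy ihx ihy =>
      intro P hP
      obtain ⟨P₁, hP₁⟩ := exists_preimage hΓ hx
      obtain ⟨P₂, hP₂⟩ := exists_preimage hΓ hy
      have : P = P₁ + P₂ := hΓ.1 (by rw [map_add, hP₁, hP₂, hP])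
      subst this
      rw [map_add, map_add, ihx P₁ hP₁, ihy P₂ hP₂]
    | smul c x hx ihx =>
      intro P hP
      obtain ⟨P₀, hP₀⟩ := exists_preimage hΓ hx
      have hc : ι (c • P₀) = c • x := by
        rw [← hP₀]; simpa using map_intCast_smul ι ℤ ℤ c P₀
      have : P = c • P₀ := hΓ.1 (by rw [hc, hP])
      subst this
      have h1 : f (c • P₀) = c • f P₀ := by simpa using map_intCast_smul f ℤ ℤ c P₀
      have h2 : g (c • P₀) = c • g P₀ := by simpa using map_intCast_smul g ℤ ℤ c P₀
      rw [h1, h2, ihx P₀ hP₀]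
  exact main (ι P) hmem P rfl

theorem mul_dp_left {z : A} {P₀ : Γ} (hP₀ : ι P₀ = dp ℤ z d) (zmul : A →ₗ[ℤ] A)
    (hz : ∀ a, zmul a = z * a) (Q : Γ) :
    ι (P₀ * Q) = dpAlgMap zmul (ι Q) := by
  have := hom_ext hΓ (ι.comp (AddMonoidHom.mulLeft P₀))
    (((dpAlgMap zmul).toAddMonoidHom).comp ι) ?_ Q
  · simpa using this
  · intro Q' r v iv hsum hQ'
    simp only [AddMonoidHom.coe_comp, AddMonoidHom.coe_mulLeft, Function.comp_apply,
      RingHom.toAddMonoidHom_eq_coe, AddMonoidHom.coe_coe]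
    rw [mul_single_left hΓ hsum hP₀ hQ', hQ', map_prod]
    simp [dpAlgMap_dp, hz]

end Canonical
end GammaLocAux

namespace GammaLocAux

theorem rename_congr {σ τ R : Type*} [CommRing R] {f g : σ → τ} {p : MvPolynomial σ R}
    (h : ∀ i ∈ p.vars, f i = g i) : rename f p = rename g p := by
  refine MvPolynomial.hom_congr_vars (f₁ := (rename f).toRingHom) (f₂ := (rename g).toRingHom)
    ?_ ?_ rfl
  · ext x
    simp
  · intro i hi _
    simp [h i hi]

section Loc
variable {R : Type*} [CommRing R] (T : Submonoid R)

/-- The localization map, as a `ℤ`-linear map. -/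
noncomputable def algLin : R →ₗ[ℤ] Localization T :=
  (algebraMap R (Localization T)).toAddMonoidHom.toIntLinearMap

/-- Multiplication by an element, as a `ℤ`-linear map. -/
noncomputable def mulLin (A : Type*) [CommRing A] (z : A) : A →ₗ[ℤ] A :=
  LinearMap.mulLeft ℤ z

@[simp] theorem algLin_apply (v : R) : algLin T v = algebraMap R (Localization T) v := rfl
@[simp] theorem mulLin_apply (A : Type*) [CommRing A] (z v : A) : mulLin A z v = z * v := rfl

theorem comm_rename (t : R) (y : MvPolynomial (R × ℕ) ℤ) :
    rename (vren (algLin T)) (rename (vren (mulLin R t)) y)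
      = rename (vren (mulLin (Localization T) (algebraMap R (Localization T) t)))
          (rename (vren (algLin T)) y) := by
  rw [rename_rename, rename_rename]
  have h : (vren (algLin T)) ∘ (vren (mulLin R t))
      = (vren (mulLin (Localization T) (algebraMap R (Localization T) t))) ∘ (vren (algLin T)) := by
    funext vn
    simp [vren, map_mul]
  rw [h]

theorem lam_lam (z₁ z₂ : Localization T) (x : MvPolynomial (Localization T × ℕ) ℤ) :
    rename (vren (mulLin (Localization T) z₁)) (rename (vren (mulLin (Localization T) z₂)) x)
      = rename (vren (mulLin (Localization T) (z₁ * z₂))) x := by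
  rw [rename_rename]
  have h : (vren (mulLin (Localization T) z₁)) ∘ (vren (mulLin (Localization T) z₂))
      = vren (mulLin (Localization T) (z₁ * z₂)) := by
    funext vn
    simp [vren, mul_assoc]
  rw [h]

theorem tau_tau (u t : R) (p : MvPolynomial (R × ℕ) ℤ) :
    rename (vren (mulLin R u)) (rename (vren (mulLin R t)) p)
      = rename (vren (mulLin R (u * t))) p := by
  rw [rename_rename]
  have h : (vren (mulLin R u)) ∘ (vren (mulLin R t)) = vren (mulLin R (u * t)) := by
    funext vn
    simp [vren, mul_assoc]
  rw [h]

theorem exists_common_mul {ι : Type*} (s : Finset ι) (a b : ι → R)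
    (h : ∀ i ∈ s, algebraMap R (Localization T) (a i) = algebraMap R (Localization T) (b i)) :
    ∃ u : T, ∀ i ∈ s, (u : R) * a i = (u : R) * b i := by
  classical
  induction s using Finset.induction_on with
  | empty => exact ⟨1, by simp⟩
  | @insert x s hx ih =>
    obtain ⟨u, hu⟩ := ih (fun i hi => h i (Finset.mem_insert_of_mem hi))
    obtain ⟨u₀, hu₀⟩ := IsLocalization.exists_of_eq (M := T) (S := Localization T)
      (h x (Finset.mem_insert_self x s))
    refine ⟨u₀ * u, fun i hi => ?_⟩
    rcases Finset.mem_insert.mp hi with rfl | hi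
    · calc ((u₀ * u : T) : R) * a i = (u : R) * ((u₀ : R) * a i) := by push_cast; ring
      _ = (u : R) * ((u₀ : R) * b i) := by rw [hu₀]
      _ = ((u₀ * u : T) : R) * b i := by push_cast; ring
    · calc ((u₀ * u : T) : R) * a i = (u₀ : R) * ((u : R) * a i) := by push_cast; ring
      _ = (u₀ : R) * ((u : R) * b i) := by rw [hu i hi]
      _ = ((u₀ * u : T) : R) * b i := by push_cast; ring

theorem Ksur (q : MvPolynomial (Localization T × ℕ) ℤ) :
    ∃ (u : T) (q' : MvPolynomial (R × ℕ) ℤ),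
      rename (vren (algLin T)) q'
        = rename (vren (mulLin (Localization T) (algebraMap R (Localization T) u))) q := by
  classical
  obtain ⟨u, hu⟩ := IsLocalization.exist_integer_multiples_of_finset T (q.vars.image Prod.fst)
  have hch : ∀ z ∈ q.vars.image Prod.fst,
      ∃ a : R, algebraMap R (Localization T) a = (u : R) • z := fun z hz => hu z hz
  choose! ℓ hℓ using hch
  refine ⟨u, rename (fun zn => (ℓ zn.1, zn.2)) q, ?_⟩
  rw [rename_rename]
  apply rename_congr
  rintro ⟨z, n⟩ hzn
  have hz : z ∈ q.vars.image Prod.fst := Finset.mem_image.mpr ⟨(z, n), hzn, rfl⟩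
  show (algebraMap R (Localization T) (ℓ z), n) = (algebraMap R (Localization T) u * z, n)
  rw [hℓ z hz, Algebra.smul_def]

theorem K0 (q : MvPolynomial (R × ℕ) ℤ) (h : rename (vren (algLin T)) q = 0) :
    ∃ u : T, rename (vren (mulLin R (u : R))) q = 0 := by
  classical
  obtain ⟨u, hu⟩ := exists_common_mul T
    ((q.vars ×ˢ q.vars).filter (fun pr => vren (algLin T) pr.1 = vren (algLin T) pr.2))
    (fun pr => pr.1.1) (fun pr => pr.2.1) (by
      rintro ⟨vn, wn⟩ hp
      simp only [Finset.mem_filter] at hp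
      exact congrArg Prod.fst hp.2)
  have hmerge : ∀ vn ∈ q.vars, ∀ wn ∈ q.vars, vren (algLin T) vn = vren (algLin T) wn →
      vren (mulLin R (u : R)) vn = vren (mulLin R (u : R)) wn := by
    intro vn hvn wn hwn hfe
    have h1 : (u : R) * vn.1 = (u : R) * wn.1 := hu (vn, wn)
      (Finset.mem_filter.mpr ⟨Finset.mem_product.mpr ⟨hvn, hwn⟩, hfe⟩)
    have h2 : vn.2 = wn.2 := by simpa [vren] using congrArg Prod.snd hfe
    show ((u : R) * vn.1, vn.2) = ((u : R) * wn.1, wn.2)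
    rw [h1, h2]
  set hmap : Localization T × ℕ → R × ℕ := fun zn =>
    if h : ∃ vn, vn ∈ q.vars ∧ vren (algLin T) vn = zn then vren (mulLin R (u : R)) h.choose
    else ((0 : R), zn.2) with hmapdef
  have key : ∀ vn ∈ q.vars, vren (mulLin R (u : R)) vn = hmap (vren (algLin T) vn) := by
    intro vn hvn
    have hex : ∃ wn, wn ∈ q.vars ∧ vren (algLin T) wn = vren (algLin T) vn := ⟨vn, hvn, rfl⟩
    rw [hmapdef]
    simp only [dif_pos hex]
    exact (hmerge _ hex.choose_spec.1 _ hvn hex.choose_spec.2).symm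
  refine ⟨u, ?_⟩
  have h2 : rename (vren (mulLin R (u : R))) q = rename (hmap ∘ vren (algLin T)) q :=
    rename_congr (fun vn hvn => key vn hvn)
  rw [h2, ← rename_rename, h, map_zero]

end Loc
end GammaLocAux

namespace GammaLocAux
section Kpr
variable {R : Type*} [CommRing R] (T : Submonoid R)

theorem Kprime {x : MvPolynomial (Localization T × ℕ) ℤ}
    (hx : x ∈ dpRelations ℤ (Localization T)) :
    ∃ (t : T) (y : MvPolynomial (R × ℕ) ℤ), y ∈ dpRelations ℤ R ∧
      rename (vren (algLin T)) y
        = rename (vren (mulLin (Localization T) (algebraMap R (Localization T) t))) x := by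
  have hx' : x ∈ Submodule.span (MvPolynomial (Localization T × ℕ) ℤ)
      ({q | ∃ v : Localization T, q = X (v, 0) - 1} ∪
       {q | ∃ (c : ℤ) (v : Localization T) (n : ℕ), q = X (c • v, n) - C (c ^ n) * X (v, n)} ∪
       {q | ∃ (v : Localization T) (n m : ℕ),
          q = X (v, n) * X (v, m) - C ((n + m).choose n : ℤ) * X (v, n + m)} ∪
       {q | ∃ (v w : Localization T) (n : ℕ),
          q = X (v + w, n) - ∑ ij ∈ Finset.HasAntidiagonal.antidiagonal n, X (v, ij.1) * X (w, ij.2)}) := hx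
  clear hx
  induction hx' using Submodule.span_induction with
  | mem s hs =>
    rcases hs with ((⟨v, rfl⟩ | ⟨c, v, n, rfl⟩) | ⟨v, n, m, rfl⟩) | ⟨v, w, n, rfl⟩
    · obtain ⟨⟨a, t⟩, hat⟩ := IsLocalization.surj (M := T) (S := Localization T) v
      have he : algebraMap R (Localization T) a = algebraMap R (Localization T) t * v := by
        rw [← hat]; ring
      refine ⟨t, X (a, 0) - 1, Ideal.subset_span (Or.inl (Or.inl (Or.inl ⟨a, rfl⟩))), ?_⟩
      simp [vren, he]
    · obtain ⟨⟨a, t⟩, hat⟩ := IsLocalization.surj (M := T) (S := Localization T) v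
      have he : algebraMap R (Localization T) a = algebraMap R (Localization T) t * v := by
        rw [← hat]; ring
      have he2 : algebraMap R (Localization T) (c • a)
          = algebraMap R (Localization T) t * (c • v) := by
        have h1 : algebraMap R (Localization T) (c • a)
            = c • algebraMap R (Localization T) a := by
          simpa using map_intCast_smul (algebraMap R (Localization T)) ℤ ℤ c a
        rw [h1, he, mul_smul_comm]
      refine ⟨t, X (c • a, n) - C (c ^ n) * X (a, n),
        Ideal.subset_span (Or.inl (Or.inl (Or.inr ⟨c, a, n, rfl⟩))), ?_⟩
      simp [vren, he, he2]
      ring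
    · obtain ⟨⟨a, t⟩, hat⟩ := IsLocalization.surj (M := T) (S := Localization T) v
      have he : algebraMap R (Localization T) a = algebraMap R (Localization T) t * v := by
        rw [← hat]; ring
      refine ⟨t, X (a, n) * X (a, m) - C ((n + m).choose n : ℤ) * X (a, n + m),
        Ideal.subset_span (Or.inl (Or.inr ⟨a, n, m, rfl⟩)), ?_⟩
      simp [vren, he]
    · obtain ⟨⟨a, t⟩, hat⟩ := IsLocalization.surj (M := T) (S := Localization T) v
      obtain ⟨⟨b, s⟩, hbs⟩ := IsLocalization.surj (M := T) (S := Localization T) w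
      have hv : algebraMap R (Localization T) (a * s)
          = algebraMap R (Localization T) (t * s) * v := by
        rw [map_mul, map_mul, ← hat]; ring
      have hw : algebraMap R (Localization T) (b * t)
          = algebraMap R (Localization T) (t * s) * w := by
        rw [map_mul, map_mul, ← hbs]; ring
      have hvw : algebraMap R (Localization T) (a * s + b * t)
          = algebraMap R (Localization T) (t * s) * (v + w) := by
        rw [map_add, hv, hw, mul_add]
      refine ⟨t * s, X (a * s + b * t, n)
          - ∑ ij ∈ Finset.HasAntidiagonal.antidiagonal n, X (a * s, ij.1) * X (b * t, ij.2),
        Ideal.subset_span (Or.inr ⟨a * s, b * t, n, rfl⟩), ?_⟩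
      simp [vren, hv, hw, hvw]
  | zero => exact ⟨1, 0, Submodule.zero_mem _, by simp⟩
  | add x y hxm hym ihx ihy =>
    obtain ⟨t₁, y₁, hy₁, e₁⟩ := ihx
    obtain ⟨t₂, y₂, hy₂, e₂⟩ := ihy
    refine ⟨t₁ * t₂, rename (vren (mulLin R (t₂ : R))) y₁ + rename (vren (mulLin R (t₁ : R))) y₂,
      Submodule.add_mem _ (rename_mem_dpRelations (mulLin R (t₂ : R)) hy₁)
        (rename_mem_dpRelations (mulLin R (t₁ : R)) hy₂), ?_⟩
    have hco : ((t₁ * t₂ : T) : R) = (t₁ : R) * (t₂ : R) := rfl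
    rw [map_add, comm_rename, comm_rename, e₁, e₂, lam_lam, lam_lam, map_add, hco, map_mul,
      mul_comm (algebraMap R (Localization T) (t₂ : R)) (algebraMap R (Localization T) (t₁ : R))]
  | smul q x hxm ihx =>
    obtain ⟨t, y, hy, e⟩ := ihx
    obtain ⟨u, q', hq'⟩ := Ksur T q
    refine ⟨u * t, rename (vren (mulLin R (t : R))) q' * rename (vren (mulLin R (u : R))) y,
      Ideal.mul_mem_left _ _ (rename_mem_dpRelations (mulLin R (u : R)) hy), ?_⟩
    have hco : ((u * t : T) : R) = (u : R) * (t : R) := rfl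
    rw [smul_eq_mul, map_mul, map_mul, comm_rename, comm_rename, e, hq', lam_lam, lam_lam,
      hco, map_mul, mul_comm (algebraMap R (Localization T) (t : R))
        (algebraMap R (Localization T) (u : R))]

theorem Kfull {p : MvPolynomial (R × ℕ) ℤ}
    (hp : rename (vren (algLin T)) p ∈ dpRelations ℤ (Localization T)) :
    ∃ t : T, rename (vren (mulLin R (t : R))) p ∈ dpRelations ℤ R := by
  obtain ⟨t, y, hy, e⟩ := Kprime T hp
  have e2 : rename (vren (algLin T)) y
      = rename (vren (algLin T)) (rename (vren (mulLin R (t : R))) p) :=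
    e.trans (comm_rename T (t : R) p).symm
  have h0 : rename (vren (algLin T)) (rename (vren (mulLin R (t : R))) p - y) = 0 := by
    rw [map_sub, ← e2, sub_self]
  obtain ⟨u, hu⟩ := K0 T _ h0
  rw [map_sub, sub_eq_zero, tau_tau] at hu
  refine ⟨u * t, ?_⟩
  have hc : ((u * t : T) : R) = (u : R) * (t : R) := rfl
  rw [hc, hu]
  exact rename_mem_dpRelations (mulLin R (u : R)) hy

end Kpr
end GammaLocAux

open GammaLocAux

/-- **Divided powers and localization.** Let `R` be a commutative ring, `T ⊆ R` a
multiplicative subset and `d ∈ ℕ`.  Then `T^[d] = {t^[d] | t ∈ T}` is a multiplicative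
subset of the commutative ring `Γ^d(R)` (with its canonical ring structure), and there is a
ring isomorphism `Γ^d(R[T⁻¹]) ≅ Γ^d(R)[(T^[d])⁻¹]`. -/
theorem gammaRing_localization
    (R : Type*) [CommRing R] (T : Submonoid R) (d : ℕ)
    (ΓR : Type*) [CommRing ΓR] (ι : ΓR →+ DividedPowerAlg ℤ R)
    (hΓR : IsCanonicalGammaRing ℤ R d ΓR ι)
    (ΓRT : Type*) [CommRing ΓRT] (ι' : ΓRT →+ DividedPowerAlg ℤ (Localization T))
    (hΓRT : IsCanonicalGammaRing ℤ (Localization T) d ΓRT ι') :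
    ∃ Td : Submonoid ΓR,
      (Td : Set ΓR) = {g : ΓR | ∃ t ∈ T, ι g = dp ℤ t d} ∧
      Nonempty (ΓRT ≃+* Localization Td) := by
  classical
  -- the multiplicative set `T^[d]`
  let Td : Submonoid ΓR :=
    { carrier := {g : ΓR | ∃ t ∈ T, ι g = dp ℤ t d}
      one_mem' := ⟨1, T.one_mem, hΓR.2.2.1⟩
      mul_mem' := by
        rintro a b ⟨t, ht, ha⟩ ⟨s, hs, hb⟩
        exact ⟨t * s, T.mul_mem ht hs, dp_mul_dp hΓR ha hb⟩ }
  refine ⟨Td, rfl, ?_⟩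
  -- the induced map `Γ^d(R) → Γ^d(R[T⁻¹])`
  set Φ : DividedPowerAlg ℤ R →+* DividedPowerAlg ℤ (Localization T) :=
    dpAlgMap (algLin T) with hΦdef
  have hFex : ∀ P : ΓR, ∃ Q : ΓRT, ι' Q = Φ (ι P) := by
    intro P
    apply exists_preimage hΓRT
    apply dpAlgMap_mem_gammaDP (algLin T) d (ι P)
    have : ι P ∈ Set.range ι := ⟨P, rfl⟩
    rw [hΓR.2.1] at this
    exact this
  choose F hF using hFex
  have hFadd : ∀ P Q : ΓR, F (P + Q) = F P + F Q := by
    intro P Q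
    apply hΓRT.1
    rw [map_add, hF, hF, hF, map_add, map_add]
  let FAdd : ΓR →+ ΓRT := AddMonoidHom.mk' F hFadd
  have hFone : F 1 = 1 := by
    apply hΓRT.1
    rw [hF, hΓR.2.2.1, hΓRT.2.2.1, hΦdef, dpAlgMap_dp]
    simp
  -- multiplicativity of F
  have core : ∀ (P Q : ΓR) (r s : ℕ) (v : Fin r → R) (iv : Fin r → ℕ)
      (w : Fin s → R) (iw : Fin s → ℕ), (∑ a, iv a) = d → (∑ b, iw b) = d →
      ι P = ∏ a, dp ℤ (v a) (iv a) → ι Q = ∏ b, dp ℤ (w b) (iw b) →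
      F (P * Q) = F P * F Q := by
    intro P Q r s v iv w iw hiv hiw hP hQ
    apply hΓRT.1
    have hFP : ι' (F P) = ∏ a, dp ℤ (algebraMap R (Localization T) (v a)) (iv a) := by
      rw [hF, hP, map_prod]
      simp [hΦdef, dpAlgMap_dp]
    have hFQ : ι' (F Q) = ∏ b, dp ℤ (algebraMap R (Localization T) (w b)) (iw b) := by
      rw [hF, hQ, map_prod]
      simp [hΦdef, dpAlgMap_dp]
    rw [hF, hΓR.2.2.2 r s v iv w iw hiv hiw P Q hP hQ,
      hΓRT.2.2.2 r s _ iv _ iw hiv hiw (F P) (F Q) hFP hFQ, map_sum]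
    refine Finset.sum_congr rfl fun m _ => ?_
    rw [apply_ite Φ, map_zero]
    congr 1
    rw [map_prod]
    refine Finset.prod_congr rfl fun a _ => ?_
    rw [map_prod]
    refine Finset.prod_congr rfl fun b _ => ?_
    rw [hΦdef, dpAlgMap_dp]
    simp [map_mul]
  have step1 : ∀ (Q : ΓR) (r : ℕ) (w : Fin r → R) (iw : Fin r → ℕ), (∑ b, iw b) = d →
      ι Q = ∏ b, dp ℤ (w b) (iw b) → ∀ P, F (P * Q) = F P * F Q := by
    intro Q r w iw hiw hQ P
    have := hom_ext hΓR (FAdd.comp (AddMonoidHom.mulRight Q))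
      ((AddMonoidHom.mulRight (F Q)).comp FAdd)
      (fun P' r' v iv hiv hP' => by
        simpa [FAdd] using core P' Q r' r v iv w iw hiv hiw hP' hQ) P
    simpa [FAdd] using this
  have hFmul : ∀ P Q : ΓR, F (P * Q) = F P * F Q := by
    intro P Q
    have := hom_ext hΓR (FAdd.comp (AddMonoidHom.mulLeft P))
      ((AddMonoidHom.mulLeft (F P)).comp FAdd)
      (fun Q' r w iw hiw hQ' => by
        simpa [FAdd] using step1 Q' r w iw hiw hQ' P) Q
    simpa [FAdd] using this
  have hFzero : F 0 = 0 := by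
    apply hΓRT.1
    rw [hF, map_zero, map_zero, map_zero]
  let Fhom : ΓR →+* ΓRT :=
    { toFun := F, map_one' := hFone, map_mul' := hFmul, map_zero' := hFzero,
      map_add' := hFadd }
  -- the elements of Td become units
  have hunit : ∀ y : Td, IsUnit (Fhom y) := by
    rintro ⟨y, t, ht, hy⟩
    obtain ⟨u, hu⟩ := dp_mem_range hΓRT (Localization.mk 1 ⟨t, ht⟩)
    have hy' : ι' (Fhom y) = dp ℤ (algebraMap R (Localization T) t) d := by
      show ι' (F y) = _
      rw [hF, hy, hΦdef, dpAlgMap_dp]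
      simp
    refine IsUnit.of_mul_eq_one u (hΓRT.1 ?_)
    show ι' (Fhom y * u) = ι' 1
    rw [dp_mul_dp hΓRT hy' hu, hΓRT.2.2.1]
    congr 1
    rw [Localization.mk_eq_mk']
    have := IsLocalization.mk'_spec (Localization T) (1 : R) (⟨t, ht⟩ : T)
    rw [map_one] at this
    rw [mul_comm] at this ⊢
    simpa using this
  -- the localized map
  let L : Localization Td →+* ΓRT := IsLocalization.lift (S := Localization Td) hunit
  have hLF : ∀ P : ΓR, L (algebraMap ΓR (Localization Td) P) = Fhom P :=
    fun P => IsLocalization.lift_eq hunit P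
  -- surjectivity
  have hLsurj : Function.Surjective L := by
    have main : ∀ x ∈ Submodule.span ℤ {x : DividedPowerAlg ℤ (Localization T) |
        ∃ (r : ℕ) (vf : Fin r → Localization T) (gg : Fin r → ℕ),
          (∑ a, gg a) = d ∧ x = ∏ a, dp ℤ (vf a) (gg a)},
        ∀ q : ΓRT, ι' q = x → ∃ w, L w = q := by
      intro x hx
      induction hx using Submodule.span_induction with
      | mem x hxg =>
        intro q hq
        obtain ⟨s, z, j, hsum, rfl⟩ := hxg
        obtain ⟨t, htint⟩ := IsLocalization.exist_integer_multiples_of_finset T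
          (Finset.univ.image z)
        have hch : ∀ b : Fin s, ∃ cb : R,
            algebraMap R (Localization T) cb = (t : R) • z b := by
          intro b
          exact htint (z b) (Finset.mem_image_of_mem z (Finset.mem_univ b))
        choose c hc using hch
        obtain ⟨P, hP⟩ := mem_range_of_gen hΓR c j hsum
        obtain ⟨gt, hgt⟩ := dp_mem_range hΓR (t : R)
        have hgtTd : gt ∈ Td := ⟨t, t.2, hgt⟩
        refine ⟨Localization.mk P ⟨gt, hgtTd⟩, ?_⟩
        have hu := hunit ⟨gt, hgtTd⟩
        have h1 : L (Localization.mk P ⟨gt, hgtTd⟩) * Fhom gt = Fhom P := by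
          have : (Localization.mk P ⟨gt, hgtTd⟩) * algebraMap ΓR (Localization Td) gt
              = algebraMap ΓR (Localization Td) P := by
            rw [Localization.mk_eq_mk']
            exact IsLocalization.mk'_spec (Localization Td) P ⟨gt, hgtTd⟩
          rw [← hLF gt, ← map_mul, this, hLF]
        have h2 : q * Fhom gt = Fhom P := by
          apply hΓRT.1
          have hFgt : ι' (Fhom gt) = dp ℤ (algebraMap R (Localization T) t) d := by
            show ι' (F gt) = _
            rw [hF, hgt, hΦdef, dpAlgMap_dp]
            simp
          rw [mul_single_right hΓRT hsum hq hFgt]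
          show _ = ι' (F P)
          rw [hF, hP, map_prod]
          refine Finset.prod_congr rfl fun b _ => ?_
          rw [hΦdef, dpAlgMap_dp]
          congr 1
          simp only [algLin_apply]
          rw [hc b, Algebra.smul_def, mul_comm]
        rw [← h2] at h1
        exact hu.mul_right_cancel h1
      | zero =>
        intro q hq
        have : q = 0 := eq_zero_of hΓRT hq
        exact ⟨0, by rw [map_zero, this]⟩
      | add x y hx hy ihx ihy =>
        intro q hq
        obtain ⟨q₁, hq₁⟩ := exists_preimage hΓRT hx
        obtain ⟨q₂, hq₂⟩ := exists_preimage hΓRT hy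
        obtain ⟨w₁, hw₁⟩ := ihx q₁ hq₁
        obtain ⟨w₂, hw₂⟩ := ihy q₂ hq₂
        have : q = q₁ + q₂ := hΓRT.1 (by rw [map_add, hq₁, hq₂, hq])
        exact ⟨w₁ + w₂, by rw [map_add, hw₁, hw₂, this]⟩
      | smul a x hx ihx =>
        intro q hq
        obtain ⟨q₀, hq₀⟩ := exists_preimage hΓRT hx
        obtain ⟨w₀, hw₀⟩ := ihx q₀ hq₀
        have hsm : ι' (a • q₀) = a • x := by
          rw [← hq₀]
          simpa using map_intCast_smul ι' ℤ ℤ a q₀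
        have : q = a • q₀ := hΓRT.1 (hq.trans hsm.symm)
        refine ⟨a • w₀, ?_⟩
        have hL : L (a • w₀) = a • L w₀ := by
          simpa using map_intCast_smul L ℤ ℤ a w₀
        rw [hL, hw₀, this]
    intro q
    have hmem : ι' q ∈ Submodule.span ℤ {x : DividedPowerAlg ℤ (Localization T) |
        ∃ (r : ℕ) (vf : Fin r → Localization T) (gg : Fin r → ℕ),
          (∑ a, gg a) = d ∧ x = ∏ a, dp ℤ (vf a) (gg a)} := by
      have : ι' q ∈ Set.range ι' := ⟨q, rfl⟩
      rw [hΓRT.2.1] at this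
      exact this
    exact main (ι' q) hmem q rfl
  -- injectivity
  have hinjcore : ∀ P : ΓR, F P = 0 → ∃ gt ∈ Td, gt * P = 0 := by
    intro P h0
    have hΦ0 : Φ (ι P) = 0 := by rw [← hF, h0, map_zero]
    obtain ⟨p, hp⟩ := Ideal.Quotient.mk_surjective (ι P)
    rw [← hp, hΦdef, dpAlgMap_mk, Ideal.Quotient.eq_zero_iff_mem] at hΦ0
    obtain ⟨t, hmem⟩ := Kfull T hΦ0
    obtain ⟨gt, hgt⟩ := dp_mem_range hΓR (t : R)
    refine ⟨gt, ⟨t, t.2, hgt⟩, ?_⟩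
    apply eq_zero_of hΓR
    rw [mul_dp_left hΓR hgt (mulLin R (t : R)) (fun a => rfl) P, ← hp, dpAlgMap_mk,
      Ideal.Quotient.eq_zero_iff_mem]
    exact hmem
  have hLinj : Function.Injective L := by
    rw [injective_iff_map_eq_zero]
    intro w hw
    obtain ⟨⟨P, s⟩, hPs⟩ := IsLocalization.mk'_surjective Td w
    dsimp only at hPs
    subst hPs
    have h1 : Fhom P = 0 := by
      have hspec : (IsLocalization.mk' (Localization Td) P s)
            * algebraMap ΓR (Localization Td) (s : ΓR)
          = algebraMap ΓR (Localization Td) P :=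
        IsLocalization.mk'_spec (Localization Td) P s
      have := congrArg L hspec
      rw [map_mul, hw, zero_mul, hLF] at this
      exact this.symm
    obtain ⟨gt, hgtTd, hkill⟩ := hinjcore P h1
    rw [IsLocalization.mk'_eq_zero_iff]
    exact ⟨⟨gt, hgtTd⟩, hkill⟩
  exact ⟨(RingEquiv.ofBijective L ⟨hLinj, hLsurj⟩).symm⟩
end

section
/- Let k be a commutative noetherian ring and C a small preadditive category. If F is a noetherian object of the category of additive functors C → Ab, then Tor₁^ℤ(F, k) (computed objectwise) is a finitely generated object of the category of additive functors C → k-Mod. -/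
open CategoryTheory TensorProduct

section Subfunctor

variable {C : Type} [SmallCategory C] [Preadditive C]
variable (F : C ⥤ AddCommGrpCat.{0}) [F.Additive]
variable (S : ∀ c : C, AddSubgroup (F.obj c))
variable (hS : ∀ {c c' : C} (f : c ⟶ c'), ∀ x ∈ S c, F.map f x ∈ S c')

/-- The subfunctor of `F` determined by a family of subgroups closed under the maps. -/
@[simps] def auxSub : C ⥤ AddCommGrpCat.{0} where
  obj c := AddCommGrpCat.of (S c)
  map {c c'} f := AddCommGrpCat.ofHom
    { toFun := fun x => ⟨F.map f x.1, hS f x.1 x.2⟩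
      map_zero' := by ext; simp
      map_add' := by intro x y; ext; simp }
  map_id c := by ext x; simp
  map_comp {c c' c''} f g := by ext x; simp

instance auxSub_additive : (auxSub F S @hS).Additive where
  map_add := by
    intro c c' f g
    ext x
    refine Subtype.ext ?_
    show F.map (f + g) x.1 = _
    rw [F.map_add]
    rfl

/-- The inclusion of the subfunctor. -/
@[simps] def auxIncl : auxSub F S @hS ⟶ F where
  app c := AddCommGrpCat.ofHom (S c).subtype
  naturality := by intro c c' f; ext x; rfl

abbrev AddFunCat (C : Type) [SmallCategory C] [Preadditive C] :=
  ObjectProperty.FullSubcategory (fun G : C ⥤ AddCommGrpCat.{0} => G.Additive)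

/-- The object of the additive-functor category attached to `F`. -/
def FObj : AddFunCat C := ⟨F, inferInstance⟩

/-- The subfunctor as an object of the additive-functor category. -/
def auxSubObj : AddFunCat C := ⟨auxSub F S @hS, auxSub_additive F S @hS⟩

/-- The inclusion as a morphism of the additive-functor category. -/
def auxInclA : auxSubObj F S @hS ⟶ FObj F := ObjectProperty.homMk (auxIncl F S @hS)

instance auxInclA_mono : Mono (auxInclA F S @hS) := by
  constructor
  intro Z g h w
  have : ∀ (c : C) (x : Z.obj.obj c), (g.hom.app c x).1 = (h.hom.app c x).1 := by
    intro c x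
    exact congrArg (fun t : Z ⟶ FObj F => t.hom.app c x) w
  apply ObjectProperty.hom_ext
  apply NatTrans.ext
  funext c
  ext x
  exact Subtype.ext (this c x)

variable (S' : ∀ c : C, AddSubgroup (F.obj c))
variable (hS' : ∀ {c c' : C} (f : c ⟶ c'), ∀ x ∈ S' c, F.map f x ∈ S' c')

theorem auxMk_le_auxMk (h : ∀ c, S c ≤ S' c) :
    Subobject.mk (auxInclA F S @hS) ≤ Subobject.mk (auxInclA F S' @hS') := by
  refine Subobject.mk_le_mk_of_comm ?_ ?_
  · refine ObjectProperty.homMk (?_ : auxSub F S @hS ⟶ auxSub F S' @hS')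
    exact
      { app := fun c => AddCommGrpCat.ofHom (AddSubgroup.inclusion (h c))
        naturality := by intro c c' f; ext x; exact Subtype.ext rfl }
  · apply ObjectProperty.hom_ext
    apply NatTrans.ext
    funext c
    ext x
    rfl

theorem auxLe_of_mk_le_mk
    (h : Subobject.mk (auxInclA F S @hS) ≤ Subobject.mk (auxInclA F S' @hS')) :
    ∀ c, S c ≤ S' c := by
  intro c x hx
  have := congrArg (fun t : auxSubObj F S @hS ⟶ FObj F => t.hom.app c ⟨x, hx⟩)
    (Subobject.ofMkLEMk_comp h)
  simp only at this
  have : ((Subobject.ofMkLEMk (auxInclA F S @hS) (auxInclA F S' @hS') h).hom.app c ⟨x, hx⟩).1 = x := this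
  rw [← this]
  exact ((Subobject.ofMkLEMk (auxInclA F S @hS) (auxInclA F S' @hS') h).hom.app c ⟨x, hx⟩).2

end Subfunctor

section FG
variable {C : Type} [SmallCategory C] [Preadditive C]
variable (F : C ⥤ AddCommGrpCat.{0}) [F.Additive]

/-- The set of generators of the subfunctor generated by a list of elements. -/
def genSet (L : List ((c : C) × F.obj c)) (c : C) : Set (F.obj c) :=
  {y | ∃ q ∈ L, ∃ f : q.1 ⟶ c, y = F.map f q.2}

theorem genSet_mapped (L : List ((c : C) × F.obj c)) {c c' : C} (f : c ⟶ c') :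
    ∀ x ∈ AddSubgroup.closure (genSet F L c),
      F.map f x ∈ AddSubgroup.closure (genSet F L c') := by
  intro x hx
  have h1 : F.map f x ∈ (AddSubgroup.closure (genSet F L c)).map (F.map f).hom :=
    AddSubgroup.mem_map_of_mem _ hx
  rw [AddMonoidHom.map_closure] at h1
  refine AddSubgroup.closure_mono ?_ h1
  rintro y ⟨z, ⟨q, hq, g, rfl⟩, rfl⟩
  exact ⟨q, hq, g ≫ f, by simp⟩

theorem auxFG (hnoeth : WellFoundedGT (Subobject (FObj F)))
    (S : ∀ c : C, AddSubgroup (F.obj c))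
    (hS : ∀ {c c' : C} (f : c ⟶ c'), ∀ x ∈ S c, F.map f x ∈ S c') :
    ∃ L : List ((c : C) × F.obj c),
      (∀ q ∈ L, q.2 ∈ S q.1) ∧
      ∀ c, S c ≤ AddSubgroup.closure (genSet F L c) := by
  classical
  set 𝒮 : Set (Subobject (FObj F)) :=
    {Q | ∃ L : List ((c : C) × F.obj c), (∀ q ∈ L, q.2 ∈ S q.1) ∧
      Q = Subobject.mk (auxInclA F (fun c => AddSubgroup.closure (genSet F L c))
        (fun {c c'} f => genSet_mapped F L f))} with h𝒮
  obtain ⟨M, hM, hmax⟩ := hnoeth.wf.has_min 𝒮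
    ⟨_, [], by simp, rfl⟩
  obtain ⟨L, hL, rfl⟩ := hM
  refine ⟨L, hL, ?_⟩
  by_contra hcon
  push_neg at hcon
  obtain ⟨c, x, hxS, hxG⟩ := by
    simpa only [SetLike.not_le_iff_exists] using hcon
  set L' : List ((c : C) × F.obj c) := ⟨c, x⟩ :: L with hL'
  have hL'S : ∀ q ∈ L', q.2 ∈ S q.1 := by
    rintro q hq
    rcases List.mem_cons.1 hq with rfl | hq
    · exact hxS
    · exact hL q hq
  have hsub : ∀ c', genSet F L c' ⊆ genSet F L' c' := by
    rintro c' y ⟨q, hq, f, rfl⟩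
    exact ⟨q, List.mem_cons_of_mem _ hq, f, rfl⟩
  have hle : Subobject.mk (auxInclA F (fun c => AddSubgroup.closure (genSet F L c))
        (fun {c c'} f => genSet_mapped F L f)) ≤
      Subobject.mk (auxInclA F (fun c => AddSubgroup.closure (genSet F L' c))
        (fun {c c'} f => genSet_mapped F L' f)) :=
    auxMk_le_auxMk F _ _ _ _ (fun c' => AddSubgroup.closure_mono (hsub c'))
  have hmem : Subobject.mk (auxInclA F (fun c => AddSubgroup.closure (genSet F L' c))
      (fun {c c'} f => genSet_mapped F L' f)) ∈ 𝒮 := ⟨L', hL'S, rfl⟩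
  have hnot := hmax _ hmem
  have heq : Subobject.mk (auxInclA F (fun c => AddSubgroup.closure (genSet F L' c))
      (fun {c c'} f => genSet_mapped F L' f)) ≤
      Subobject.mk (auxInclA F (fun c => AddSubgroup.closure (genSet F L c))
        (fun {c c'} f => genSet_mapped F L f)) := by
    by_contra hne
    exact hnot (lt_of_le_not_ge hle hne)
  have hptwise := auxLe_of_mk_le_mk F _ _ _ _ heq c
  apply hxG
  apply hptwise
  apply AddSubgroup.subset_closure
  exact ⟨⟨c, x⟩, List.mem_cons_self, 𝟙 c, by simp⟩

end FG

set_option maxHeartbeats 1600000 in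
/-- The core computation: the kernel of the base change of an injective map into a free
`ℤ`-module is spanned by "torsion symbols". -/
theorem core {k : Type} [CommRing k] {A B : Type} [AddCommGroup A] [AddCommGroup B]
    [Module.Free ℤ B] (ι : A →ₗ[ℤ] B) (hι : Function.Injective ι) (z : k ⊗[ℤ] A)
    (hz : LinearMap.baseChange k ι z = 0) :
    z ∈ Submodule.span k {w : k ⊗[ℤ] A | ∃ (n : ℕ) (b : k) (κ : A) (u : B),
      0 < n ∧ n • b = 0 ∧ ι κ = n • u ∧ w = b ⊗ₜ[ℤ] κ} := by
  classical
  obtain ⟨T, hT⟩ := TensorProduct.exists_finset z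
  set bB := Module.Free.chooseBasis ℤ B with hbB
  set S₀ : Finset (Module.Free.ChooseBasisIndex ℤ B) :=
    T.biUnion (fun t => (bB.repr (ι t.2)).support) with hS₀
  set v : S₀ → B := fun s => bB s.1 with hv
  set B₀ : Submodule ℤ B := Submodule.span ℤ (Set.range v) with hB₀
  have hsupp : ∀ t ∈ T, ι t.2 ∈ B₀ := by
    intro t ht
    refine Submodule.span_mono ?_ (bB.mem_span_repr_support (ι t.2))
    rintro y ⟨s, hs, rfl⟩
    exact ⟨⟨s, Finset.mem_biUnion.2 ⟨t, ht, hs⟩⟩, rfl⟩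
  have li : LinearIndependent ℤ v := bB.linearIndependent.comp _ Subtype.val_injective
  set bB₀ : Module.Basis S₀ ℤ B₀ := Module.Basis.span li with hbB₀
  have hbB₀val : ∀ s : S₀, (bB₀ s : B) = bB s.1 := fun s => congrArg Subtype.val (Module.Basis.span_apply li s)
  -- the span of the tensor factors in `A`
  set V : Submodule ℤ A := Submodule.span ℤ (Prod.snd '' (T : Set (k × A))) with hV
  have hmemV : ∀ t ∈ T, t.2 ∈ V := fun t ht => Submodule.subset_span ⟨t, ht, rfl⟩
  have hVB₀ : ∀ x : V, ι x.1 ∈ B₀ := by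
    rintro ⟨x, hx⟩
    have : ι x ∈ V.map ι := Submodule.mem_map_of_mem hx
    rw [hV, Submodule.map_span] at this
    refine Submodule.span_le.2 ?_ this
    rintro y ⟨y', ⟨t, ht, rfl⟩, rfl⟩
    exact hsupp t ht
  set ιV : V →ₗ[ℤ] B₀ := LinearMap.codRestrict B₀ (ι.comp V.subtype) hVB₀ with hιV
  have hιVinj : Function.Injective ιV := by
    intro x y hxy
    have : ι x.1 = ι y.1 := congrArg Subtype.val hxy
    exact Subtype.ext (hι this)
  set N₀ : Submodule ℤ B₀ := LinearMap.range ιV with hN₀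
  set e : V ≃ₗ[ℤ] N₀ := LinearEquiv.ofInjective ιV hιVinj with he
  obtain ⟨n, snf⟩ := Submodule.smithNormalForm bB₀ N₀
  -- the lift of `z` to `k ⊗ V`
  set ζ : k ⊗[ℤ] V := ∑ t ∈ T.attach, t.1.1 ⊗ₜ (⟨t.1.2, hmemV t.1 t.2⟩ : V) with hζ
  have hζz : LinearMap.baseChange k V.subtype ζ = z := by
    rw [hζ, map_sum, hT, ← Finset.sum_attach T fun t => t.1 ⊗ₜ[ℤ] t.2]
    rfl
  set η : k ⊗[ℤ] N₀ := LinearMap.baseChange k (e : V →ₗ[ℤ] N₀) ζ with hη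
  have hζη : ζ = LinearMap.baseChange k (e.symm : N₀ →ₗ[ℤ] V) η := by
    rw [hη, ← LinearMap.comp_apply, ← LinearMap.baseChange_comp]
    have : (e.symm : N₀ →ₗ[ℤ] V) ∘ₗ (e : V →ₗ[ℤ] N₀) = LinearMap.id := by
      ext x; simp
    rw [this, LinearMap.baseChange_id, LinearMap.id_apply]
  have hηB₀ : LinearMap.baseChange k N₀.subtype η = LinearMap.baseChange k ιV ζ := by
    rw [hη, ← LinearMap.comp_apply, ← LinearMap.baseChange_comp]
    congr 1
  -- injectivity of `k ⊗ B₀ → k ⊗ B` via the retraction built from the basis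
  set π : B →ₗ[ℤ] B₀ := bB.constr ℤ (fun s =>
    if h : s ∈ S₀ then (⟨bB s, Submodule.subset_span ⟨⟨s, h⟩, rfl⟩⟩ : B₀) else 0) with hπ
  have hπval : ∀ x (hx : x ∈ B₀), π x = ⟨x, hx⟩ := by
    intro x hx
    induction hx using Submodule.span_induction with
    | mem x hxm =>
      obtain ⟨s, rfl⟩ := hxm
      refine Subtype.ext ?_
      rw [hπ, Module.Basis.constr_basis, dif_pos s.2]
    | zero => exact (map_zero π).trans (Subtype.ext rfl)
    | add x y hx hy ihx ihy => rw [map_add, ihx, ihy]; rfl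
    | smul a x hx ihx => rw [map_smul, ihx]; rfl
  have hretract : π ∘ₗ B₀.subtype = LinearMap.id := by
    ext w
    exact congrArg Subtype.val (hπval w.1 w.2)
  have hB₀inj : Function.Injective (LinearMap.baseChange k B₀.subtype) := by
    have : LinearMap.baseChange k π ∘ₗ LinearMap.baseChange k B₀.subtype =
        LinearMap.id := by
      rw [← LinearMap.baseChange_comp, hretract, LinearMap.baseChange_id]
    intro x y hxy
    have h2 := congrArg (LinearMap.baseChange k π) hxy
    rwa [← LinearMap.comp_apply, ← LinearMap.comp_apply, this, LinearMap.id_apply,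
      LinearMap.id_apply] at h2
  have hη0 : LinearMap.baseChange k N₀.subtype η = 0 := by
    rw [hηB₀]
    apply hB₀inj
    rw [← LinearMap.comp_apply, ← LinearMap.baseChange_comp, map_zero]
    have : B₀.subtype ∘ₗ ιV = ι ∘ₗ V.subtype := by ext x; rfl
    rw [this, LinearMap.baseChange_comp, LinearMap.comp_apply, hζz, hz]
  -- coordinates of `η` in the base-changed basis
  set kN : Module.Basis (Fin n) k (k ⊗[ℤ] N₀) := snf.bN.baseChange k with hkN
  set kB := snf.bM.baseChange k with hkB
  set d : Fin n → k := fun j => kN.repr η j with hd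
  have hηrep : η = ∑ j, d j ⊗ₜ[ℤ] (snf.bN j) := by
    conv_lhs => rw [← kN.sum_repr η]
    refine Finset.sum_congr rfl fun j _ => ?_
    rw [hkN, Module.Basis.baseChange_apply, TensorProduct.smul_tmul', smul_eq_mul, mul_one]
  have hcoef : ∀ j, snf.a j • d j = 0 := by
    have hsum : ∑ j, (snf.a j • d j) • (kB (snf.f j)) = 0 := by
      rw [← hη0, hηrep, map_sum]
      refine Finset.sum_congr rfl fun j _ => ?_
      rw [LinearMap.baseChange_tmul]
      have : (N₀.subtype) (snf.bN j) = snf.a j • snf.bM (snf.f j) := snf.snf j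
      rw [this, ← TensorProduct.smul_tmul, hkB, Module.Basis.baseChange_apply,
        TensorProduct.smul_tmul', smul_eq_mul, mul_one]
    have li' : LinearIndependent k (kB ∘ snf.f) :=
      kB.linearIndependent.comp snf.f snf.f.injective
    exact fun j => Fintype.linearIndependent_iff.mp li' (fun j => snf.a j • d j) hsum j
  -- write `z` as a sum of symbols
  have hzrep : z = ∑ j, d j ⊗ₜ[ℤ] ((e.symm (snf.bN j) : V) : A) := by
    rw [← hζz, hζη, hηrep, map_sum, map_sum]
    refine Finset.sum_congr rfl fun j _ => ?_
    rw [LinearMap.baseChange_tmul, LinearMap.baseChange_tmul]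
    rfl
  rw [hzrep]
  refine Submodule.sum_mem _ fun j _ => Submodule.subset_span ?_
  have hικ : ι ((e.symm (snf.bN j) : V) : A) =
      snf.a j • ((snf.bM (snf.f j) : B₀) : B) := by
    have h1 : ιV (e.symm (snf.bN j)) = ((snf.bN j : B₀)) := by
      conv_rhs => rw [← LinearEquiv.apply_symm_apply e (snf.bN j), he]
      exact (LinearEquiv.ofInjective_apply ιV (h := hιVinj) (e.symm (snf.bN j))).symm
    have h2 : ι ((e.symm (snf.bN j) : V) : A) = ((ιV (e.symm (snf.bN j)) : B₀) : B) := rfl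
    rw [h2, h1, snf.snf j]
    rfl
  have ha0 : snf.a j ≠ 0 := by
    intro h0
    have hval : ((snf.bN j : B₀)) = 0 := by
      have h := snf.snf j
      rw [h0, zero_smul] at h
      exact h
    exact Module.Basis.ne_zero snf.bN j (Subtype.coe_injective hval)
  set m : ℕ := (snf.a j).natAbs with hm
  have hmpos : 0 < m := Int.natAbs_pos.2 ha0
  rcases Int.natAbs_eq (snf.a j) with hpos | hneg
  · refine ⟨m, d j, _, ((snf.bM (snf.f j) : B₀) : B), hmpos, ?_, ?_, rfl⟩
    · rw [← natCast_zsmul, ← hpos]; exact hcoef j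
    · rw [hικ, ← natCast_zsmul, ← hpos]
  · refine ⟨m, d j, _, -((snf.bM (snf.f j) : B₀) : B), hmpos, ?_, ?_, rfl⟩
    · rw [← natCast_zsmul]
      have : (m : ℤ) = -(snf.a j) := by omega
      rw [this, neg_smul, hcoef j, neg_zero]
    · rw [hικ, ← natCast_zsmul, smul_neg]
      have : (m : ℤ) = -(snf.a j) := by omega
      rw [this, neg_smul, neg_neg]
section Symbols
variable {G H Q : Type} [AddCommGroup G] [AddCommGroup H] [AddCommGroup Q]
variable {k : Type} [CommRing k]
variable (i : G →+ H) (p : H →+ Q)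

theorem symbol_welldef (hinj : Function.Injective i)
    (hker : ∀ y : H, p y = 0 → ∃ w, i w = y)
    (g : ℕ) (b : k) (hb : g • b = 0) (κ κ' : G) (u u' : H)
    (h1 : i κ = g • u) (h2 : i κ' = g • u') (hpu : p u = p u') :
    (b ⊗ₜ[ℤ] κ : k ⊗[ℤ] G) = b ⊗ₜ[ℤ] κ' := by
  obtain ⟨w, hw⟩ := hker (u' - u) (by rw [map_sub, hpu, sub_self])
  have hκ' : κ' = κ + g • w := by
    apply hinj
    rw [map_add, h1, h2, AddMonoidHom.map_nsmul, hw, smul_sub, ← add_sub_assoc,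
      add_comm, add_sub_assoc, sub_self, add_zero]
  rw [hκ', tmul_add, ← natCast_zsmul w g, ← TensorProduct.smul_tmul, natCast_zsmul,
    hb, zero_tmul, add_zero]

theorem symbol_reduce (hinj : Function.Injective i)
    (hker : ∀ y : H, p y = 0 → ∃ w, i w = y)
    (hpi : ∀ x : G, p (i x) = 0)
    (N : ℕ) (hN : 0 < N) (htors : ∀ q : Q, (∃ m : ℕ, 0 < m ∧ m • q = 0) → N • q = 0)
    (n : ℕ) (hn : 0 < n) (b : k) (hb : n • b = 0)
    (κ : G) (u : H) (hκ : i κ = n • u) :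
    ∃ (g : ℕ) (b' : k) (κ' : G), 0 < g ∧ g ≤ N ∧ g • b' = 0 ∧
      i κ' = g • u ∧ g • (p u) = 0 ∧ (b ⊗ₜ[ℤ] κ : k ⊗[ℤ] G) = b' ⊗ₜ[ℤ] κ' := by
  have ha : n • (p u) = 0 := by
    have := hpi κ
    rw [hκ, AddMonoidHom.map_nsmul] at this
    exact this
  have hNa : N • (p u) = 0 := htors _ ⟨n, hn, ha⟩
  set g : ℕ := Nat.gcd n N with hgdef
  have hg0 : 0 < g := Nat.gcd_pos_of_pos_left _ hn
  have hgN : g ≤ N := Nat.gcd_le_right _ hN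
  have hga : g • (p u) = 0 := by
    have hbez : (g : ℤ) = n * Int.gcdA n N + N * Int.gcdB n N := by
      rw [hgdef, ← Int.gcd_natCast_natCast, Int.gcd_eq_gcd_ab]
    rw [← natCast_zsmul, hbez, add_smul, mul_comm (n : ℤ), mul_comm (N : ℤ),
      mul_smul, mul_smul, natCast_zsmul, natCast_zsmul, ha, hNa, smul_zero,
      smul_zero, add_zero]
  obtain ⟨w, hw⟩ := hker (g • u) (by rw [AddMonoidHom.map_nsmul, hga])
  set m : ℕ := n / g with hmdef
  have hgm : g * m = n := Nat.mul_div_cancel' (Nat.gcd_dvd_left n N)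
  have hκw : κ = m • w := by
    apply hinj
    rw [AddMonoidHom.map_nsmul, hw, hκ, smul_smul, mul_comm m g, hgm]
  refine ⟨g, m • b, w, hg0, hgN, ?_, hw, hga, ?_⟩
  · rw [smul_smul, hgm, hb]
  · rw [hκw, ← natCast_zsmul w m, ← TensorProduct.smul_tmul, natCast_zsmul]

end Symbols

section NTor
variable {C : Type} [SmallCategory C] [Preadditive C]
variable (F : C ⥤ AddCommGrpCat.{0})

/-- The subgroup of `g`-torsion elements. -/
def nTor (g : ℕ) (c : C) : AddSubgroup (F.obj c) where
  carrier := {x | g • x = 0}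
  zero_mem' := smul_zero g
  add_mem' := by
    intro x y hx hy
    show g • (x + y) = 0
    rw [smul_add, hx, hy, add_zero]
  neg_mem' := by
    intro x hx
    show g • (-x) = 0
    rw [smul_neg, hx, neg_zero]

theorem nTor_mapped (g : ℕ) {c c' : C} (f : c ⟶ c') :
    ∀ x ∈ nTor F g c, F.map f x ∈ nTor F g c' := by
  intro x hx
  show g • (F.map f x) = 0
  rw [← AddMonoidHom.map_nsmul (F.map f).hom g x, hx, map_zero]

/-- The subgroup of all torsion elements. -/
def allTor (c : C) : AddSubgroup (F.obj c) where
  carrier := {x | ∃ m : ℕ, 0 < m ∧ m • x = 0}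
  zero_mem' := ⟨1, one_pos, smul_zero 1⟩
  add_mem' := by
    rintro x y ⟨mx, hmx, hx⟩ ⟨my, hmy, hy⟩
    refine ⟨mx * my, Nat.mul_pos hmx hmy, ?_⟩
    have h1 : (mx * my) • x = 0 := by rw [mul_comm, mul_smul, hx, smul_zero]
    have h2 : (mx * my) • y = 0 := by rw [mul_smul, hy, smul_zero]
    rw [smul_add, h1, h2, add_zero]
  neg_mem' := by
    rintro x ⟨m, hm, hx⟩
    exact ⟨m, hm, by rw [smul_neg, hx, neg_zero]⟩

theorem allTor_mapped {c c' : C} (f : c ⟶ c') :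
    ∀ x ∈ allTor F c, F.map f x ∈ allTor F c' := by
  rintro x ⟨m, hm, hx⟩
  exact ⟨m, hm, by rw [← AddMonoidHom.map_nsmul (F.map f).hom m x, hx, map_zero]⟩

end NTor

set_option maxHeartbeats 4000000 in
/-- Let `k` be a commutative noetherian ring and `C` a small preadditive category.  Let `F` be
a noetherian object of the category of additive functors `C → Ab` (every ascending chain of
subobjects stabilizes), presented by an exact sequence `0 → K → P → F → 0` of additive
functors with each `P(c)` a free abelian group.  Then the objectwise functor
`Tor₁^ℤ(F, k) = ker(k ⊗_ℤ K → k ⊗_ℤ P)` is a finitely generated object of the category of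
additive functors `C → k-Mod`: it is generated by finitely many elements. -/
theorem tor_one_of_noetherian_functor_finitelyGenerated
    (k : Type) [CommRing k] [IsNoetherianRing k]
    (C : Type) [SmallCategory C] [Preadditive C]
    (F K P : C ⥤ AddCommGrpCat.{0}) [F.Additive] [K.Additive] [P.Additive]
    (i : K ⟶ P) (p : P ⟶ F)
    (hfree : ∀ c : C, Module.Free ℤ (P.obj c))
    (hinj : ∀ c : C, Function.Injective (i.app c).hom)
    (hsurj : ∀ c : C, Function.Surjective (p.app c).hom)
    (hexact : ∀ c : C, AddMonoidHom.ker (p.app c).hom = AddMonoidHom.range (i.app c).hom)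
    (hnoeth : WellFoundedGT (Subobject
      (⟨F, ‹F.Additive›⟩ : ObjectProperty.FullSubcategory (fun G : C ⥤ AddCommGrpCat.{0} => G.Additive)))) :
    ∃ (n : ℕ) (a : Fin n → C) (x : ∀ j : Fin n, k ⊗[ℤ] K.obj (a j)),
      (∀ j : Fin n, x j ∈
        LinearMap.ker (LinearMap.baseChange k (i.app (a j)).hom.toIntLinearMap)) ∧
      ∀ c : C, LinearMap.ker (LinearMap.baseChange k (i.app c).hom.toIntLinearMap) ≤
        Submodule.span k
          {z | ∃ (j : Fin n) (f : a j ⟶ c),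
            z = LinearMap.baseChange k (K.map f).hom.toIntLinearMap (x j)} := by
  classical
  have hnoeth' : WellFoundedGT (Subobject (FObj F)) := hnoeth
  -- choice of lifts along `p`
  have hs : ∀ (c : C) (a : F.obj c), ∃ u, p.app c u = a := fun c => hsurj c
  choose uch huch using hs
  -- kernel of `p` is the range of `i`
  have hker : ∀ (c : C) (y : P.obj c), p.app c y = 0 → ∃ w, i.app c w = y := by
    intro c y hy
    have hy' : y ∈ AddMonoidHom.range (i.app c).hom := by
      rw [← hexact c]
      exact hy
    obtain ⟨w, hw⟩ := hy'
    exact ⟨w, hw⟩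
  have hpi : ∀ (c : C) (x : K.obj c), p.app c (i.app c x) = 0 := by
    intro c x
    have : i.app c x ∈ AddMonoidHom.ker (p.app c).hom := by
      rw [hexact c]
      exact ⟨x, rfl⟩
    exact this
  choose wch hwch using hker
  have hker : ∀ (c : C) (y : P.obj c), p.app c y = 0 → ∃ w, i.app c w = y :=
    fun c y hy => ⟨wch c y hy, hwch c y hy⟩
  set wtot : ∀ c : C, P.obj c → K.obj c := fun c y =>
    if h : p.app c y = 0 then wch c y h else 0 with hwtotdef
  have hwtot : ∀ (c : C) (y : P.obj c), p.app c y = 0 → i.app c (wtot c y) = y := by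
    intro c y hy
    rw [hwtotdef]
    simp only [dif_pos hy]
    exact hwch c y hy
  -- the uniform torsion bound `N`
  obtain ⟨L₀, hL₀mem, hL₀span⟩ := auxFG F hnoeth' (allTor F) (fun {c c'} f => allTor_mapped F f)
  have hLbound : ∀ L : List ((c : C) × F.obj c),
      (∀ q ∈ L, ∃ m : ℕ, 0 < m ∧ m • q.2 = 0) →
      ∃ NL : ℕ, 0 < NL ∧ ∀ q ∈ L, NL • q.2 = 0 := by
    intro L
    induction L with
    | nil => exact fun _ => ⟨1, one_pos, by simp⟩
    | cons q L ih =>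
      intro hL
      obtain ⟨NL, hNL, hNLk⟩ := ih (fun q' hq' => hL q' (List.mem_cons_of_mem _ hq'))
      obtain ⟨m, hm, hmq⟩ := hL q List.mem_cons_self
      refine ⟨m * NL, Nat.mul_pos hm hNL, ?_⟩
      rintro q' hq'
      rcases List.mem_cons.1 hq' with rfl | hq'
      · rw [mul_comm, mul_smul, hmq, smul_zero]
      · rw [mul_smul, hNLk q' hq', smul_zero]
  obtain ⟨N, hN, hNL₀⟩ := hLbound L₀ hL₀mem
  have htorsN : ∀ (c : C) (x : F.obj c), (∃ m : ℕ, 0 < m ∧ m • x = 0) → N • x = 0 := by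
    intro c x hx
    have hx' : x ∈ AddSubgroup.closure (genSet F L₀ c) := hL₀span c hx
    have hle : AddSubgroup.closure (genSet F L₀ c) ≤ nTor F N c := by
      rw [AddSubgroup.closure_le]
      rintro y ⟨q, hq, f, rfl⟩
      show N • (F.map f q.2) = 0
      rw [← AddMonoidHom.map_nsmul (F.map f).hom N q.2, hNL₀ q hq, map_zero]
    exact hle hx'
  -- generators of the `g`-torsion subfunctors
  have hLgex : ∀ g : ℕ, ∃ L : List ((c : C) × F.obj c),
      (∀ q ∈ L, q.2 ∈ nTor F g q.1) ∧
      ∀ c, nTor F g c ≤ AddSubgroup.closure (genSet F L c) :=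
    fun g => auxFG F hnoeth' (nTor F g) (fun {c c'} f => nTor_mapped F g f)
  choose Lg hLgmem hLgspan using hLgex
  -- generators of the `g`-torsion of `k`
  have hktorex : ∀ g : ℕ, ∃ B : Finset k,
      Submodule.span k (B : Set k) =
      ({ carrier := {b : k | g • b = 0}
         zero_mem' := smul_zero g
         add_mem' := by
           intro b b' hb hb'
           show g • (b + b') = 0
           rw [smul_add, hb, hb', add_zero]
         smul_mem' := by
           intro r b hb
           show g • (r • b) = 0
           rw [smul_comm, hb, smul_zero] } : Submodule k k) := by
    intro g
    exact IsNoetherian.noetherian _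
  choose Bg hBg using hktorex
  have hBgmem : ∀ (g : ℕ), ∀ b ∈ Bg g, g • b = 0 := by
    intro g b hb
    have : b ∈ Submodule.span k ((Bg g : Set k)) := Submodule.subset_span hb
    rw [hBg g] at this
    exact this
  have hBgspan : ∀ (g : ℕ) (b : k), g • b = 0 → b ∈ Submodule.span k ((Bg g : Set k)) := by
    intro g b hb
    rw [hBg g]
    exact hb
  have hspan_tor : ∀ (g : ℕ), ∀ b ∈ Submodule.span k ((Bg g : Set k)), g • b = 0 := by
    intro g b hb
    rw [hBg g] at hb
    exact hb
  -- the chosen symbols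
  set κch : ∀ (g : ℕ) (c : C), F.obj c → K.obj c :=
    fun g c a => wtot c (g • uch c a) with hκchdef
  have hκch : ∀ (g : ℕ) (c : C) (a : F.obj c), g • a = 0 →
      i.app c (κch g c a) = g • uch c a := by
    intro g c a ha
    apply hwtot
    rw [AddMonoidHom.map_nsmul, huch, ha]
  set bigL : List ((c : C) × (k ⊗[ℤ] K.obj c)) :=
    (List.range (N + 1)).flatMap (fun g => (Lg g).flatMap (fun q =>
      (Bg g).toList.map (fun b =>
        (⟨q.1, b ⊗ₜ[ℤ] κch g q.1 q.2⟩ : (c : C) × (k ⊗[ℤ] K.obj c))))) with hbigLdef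
  have hbigLmem : ∀ q ∈ bigL, ∃ (g : ℕ) (q₀ : (c : C) × F.obj c) (b : k),
      g ≤ N ∧ q₀ ∈ Lg g ∧ b ∈ Bg g ∧
      q = ⟨q₀.1, b ⊗ₜ[ℤ] κch g q₀.1 q₀.2⟩ := by
    intro q hq
    rw [hbigLdef] at hq
    simp only [List.mem_flatMap, List.mem_map, List.mem_range, Finset.mem_toList] at hq
    obtain ⟨g, hg, q₀, hq₀, b, hb, rfl⟩ := hq
    exact ⟨g, q₀, b, Nat.lt_succ_iff.mp hg, hq₀, hb, rfl⟩
  have hbigLmem' : ∀ (g : ℕ), g ≤ N → ∀ q₀ ∈ Lg g, ∀ b ∈ Bg g,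
      (⟨q₀.1, b ⊗ₜ[ℤ] κch g q₀.1 q₀.2⟩ : (c : C) × (k ⊗[ℤ] K.obj c)) ∈ bigL := by
    intro g hg q₀ hq₀ b hb
    rw [hbigLdef]
    simp only [List.mem_flatMap, List.mem_map, List.mem_range, Finset.mem_toList]
    exact ⟨g, Nat.lt_succ_of_le hg, q₀, hq₀, b, hb, rfl⟩
  -- symbols lie in the kernel
  have hsymker : ∀ (g : ℕ) (c : C) (b : k) (κ : K.obj c), g • b = 0 →
      (∃ u : P.obj c, i.app c κ = g • u) →
      (b ⊗ₜ[ℤ] κ : k ⊗[ℤ] K.obj c) ∈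
        LinearMap.ker (LinearMap.baseChange k (i.app c).hom.toIntLinearMap) := by
    rintro g c b κ hb ⟨u, hu⟩
    rw [LinearMap.mem_ker, LinearMap.baseChange_tmul]
    have : (i.app c).hom.toIntLinearMap κ = g • u := hu
    rw [this, ← natCast_zsmul u g, ← TensorProduct.smul_tmul, natCast_zsmul, hb, zero_tmul]
  -- the conclusion
  refine ⟨bigL.length, fun j => (bigL.get j).1, fun j => (bigL.get j).2, ?_, ?_⟩
  · intro j
    have hmem : bigL.get j ∈ bigL := bigL.get_mem j
    obtain ⟨g, q₀, b, hgN, hq₀, hb, hqq⟩ := hbigLmem (bigL.get j) hmem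
    show (bigL.get j).2 ∈
      LinearMap.ker (LinearMap.baseChange k (i.app (bigL.get j).1).hom.toIntLinearMap)
    rw [hqq]
    exact hsymker g q₀.1 b _ (hBgmem g b hb)
      ⟨uch q₀.1 q₀.2, hκch g q₀.1 q₀.2 (hLgmem g q₀ hq₀)⟩
  · intro c z hz
    haveI : Module.Free ℤ (P.obj c) := hfree c
    set X : Set (k ⊗[ℤ] K.obj c) := {w | ∃ q ∈ bigL, ∃ f : q.1 ⟶ c,
      w = LinearMap.baseChange k (K.map f).hom.toIntLinearMap q.2} with hXdef
    have hXsub : X ⊆ {w | ∃ (j : Fin bigL.length) (f : (bigL.get j).1 ⟶ c),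
        w = LinearMap.baseChange k (K.map f).hom.toIntLinearMap ((bigL.get j).2)} := by
      rintro w ⟨q, hq, f, rfl⟩
      obtain ⟨j, rfl⟩ := List.mem_iff_get.mp hq
      exact ⟨j, f, rfl⟩
    refine Submodule.span_mono hXsub ?_
    -- the core computation
    have hz0 : LinearMap.baseChange k (i.app c).hom.toIntLinearMap z = 0 := hz
    have hinj' : Function.Injective ((i.app c).hom.toIntLinearMap) := hinj c
    have hcore := core (k := k) (i.app c).hom.toIntLinearMap hinj' z hz0
    refine Submodule.span_le.mpr ?_ hcore
    rintro w ⟨n, b, κ, u, hn, hb, hκ, rfl⟩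
    have hκ' : i.app c κ = n • u := hκ
    obtain ⟨g, b', κ', hg0, hgN, hgb', hκ'', hga', heq⟩ :=
      symbol_reduce (i.app c).hom (p.app c).hom (hinj c) (hker c) (hpi c) N hN
        (htorsN c) n hn b hb κ u hκ'
    rw [SetLike.mem_coe, heq]
    -- torsion elements of the closure
    have hclos_tor : ∀ x ∈ AddSubgroup.closure (genSet F (Lg g) c), g • x = 0 := by
      intro x hx
      have hle : AddSubgroup.closure (genSet F (Lg g) c) ≤ nTor F g c := by
        rw [AddSubgroup.closure_le]
        rintro y ⟨q, hq, f, rfl⟩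
        exact nTor_mapped F g f q.2 (hLgmem g q hq)
      exact hle hx
    -- naturality helpers
    have hinat : ∀ (c₀ : C) (f : c₀ ⟶ c) (y : K.obj c₀),
        i.app c (K.map f y) = P.map f (i.app c₀ y) := by
      intro c₀ f y
      have hn := i.naturality f
      calc i.app c (K.map f y) = (K.map f ≫ i.app c) y := rfl
        _ = (i.app c₀ ≫ P.map f) y := by rw [hn]
        _ = P.map f (i.app c₀ y) := rfl
    have hpnat : ∀ (c₀ : C) (f : c₀ ⟶ c) (y : P.obj c₀),
        p.app c (P.map f y) = F.map f (p.app c₀ y) := by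
      intro c₀ f y
      have hn := p.naturality f
      calc p.app c (P.map f y) = (P.map f ≫ p.app c) y := rfl
        _ = (p.app c₀ ≫ F.map f) y := by rw [hn]
        _ = F.map f (p.app c₀ y) := rfl
    -- the span lemma, by two nested inductions
    have symspan : ∀ (a : F.obj c), a ∈ AddSubgroup.closure (genSet F (Lg g) c) →
        ∀ b ∈ Submodule.span k ((Bg g : Set k)),
        ∀ (κ : K.obj c) (u : P.obj c), i.app c κ = g • u → p.app c u = a →
        (b ⊗ₜ[ℤ] κ : k ⊗[ℤ] K.obj c) ∈ Submodule.span k X := by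
      intro a ha
      induction ha using AddSubgroup.closure_induction with
      | mem x hx =>
        obtain ⟨q₀, hq₀, f, rfl⟩ := hx
        intro b hbsp
        induction hbsp using Submodule.span_induction with
        | mem b hbm =>
          intro κ u hκu hpu
          have hstep : (b ⊗ₜ[ℤ] κ : k ⊗[ℤ] K.obj c) =
              b ⊗ₜ[ℤ] (K.map f (κch g q₀.1 q₀.2)) := by
            refine symbol_welldef (i.app c).hom (p.app c).hom (hinj c) (hker c) g b
              (hBgmem g b hbm) κ _ u (P.map f (uch q₀.1 q₀.2)) hκu ?_ ?_
            · rw [hinat q₀.1 f, hκch g q₀.1 q₀.2 (hLgmem g q₀ hq₀),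
                AddMonoidHom.map_nsmul]
            · rw [hpu, hpnat q₀.1 f, huch]
          rw [hstep]
          refine Submodule.subset_span ?_
          exact ⟨⟨q₀.1, b ⊗ₜ[ℤ] κch g q₀.1 q₀.2⟩,
            hbigLmem' g hgN q₀ hq₀ b hbm, f, rfl⟩
        | zero =>
          intro κ u _ _
          rw [zero_tmul]
          exact zero_mem _
        | add b₁ b₂ hb₁ hb₂ ih₁ ih₂ =>
          intro κ u hκu hpu
          rw [add_tmul]
          exact add_mem (ih₁ κ u hκu hpu) (ih₂ κ u hκu hpu)
        | smul r b hbm ih =>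
          intro κ u hκu hpu
          rw [← TensorProduct.smul_tmul']
          exact Submodule.smul_mem _ r (ih κ u hκu hpu)
      | zero =>
        intro b hbsp κ u hκu hpu
        obtain ⟨w, hwu⟩ := hker c u hpu
        have hκw : κ = g • w := by
          apply hinj c
          rw [AddMonoidHom.map_nsmul, hwu, hκu]
        rw [hκw, ← natCast_zsmul w g, ← TensorProduct.smul_tmul, natCast_zsmul,
          hspan_tor g b hbsp, zero_tmul]
        exact zero_mem _
      | add x y hx hy ihx ihy =>
        intro b hbsp κ u hκu hpu
        have hgx : g • x = 0 := hclos_tor x hx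
        obtain ⟨κ₁, hκ₁⟩ := hker c (g • uch c x)
          (by rw [AddMonoidHom.map_nsmul, huch, hgx])
        have hκ₂ : i.app c (κ - κ₁) = g • (u - uch c x) := by
          rw [map_sub, hκu, hκ₁, smul_sub]
        have hpu₂ : p.app c (u - uch c x) = y := by
          rw [map_sub, hpu, huch, add_sub_cancel_left]
        have hsplit : (b ⊗ₜ[ℤ] κ : k ⊗[ℤ] K.obj c) =
            b ⊗ₜ[ℤ] κ₁ + b ⊗ₜ[ℤ] (κ - κ₁) := by
          rw [← tmul_add, add_sub_cancel]
        rw [hsplit]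
        exact add_mem (ihx b hbsp κ₁ (uch c x) hκ₁ (huch c x))
          (ihy b hbsp (κ - κ₁) (u - uch c x) hκ₂ hpu₂)
      | neg x hx ihx =>
        intro b hbsp κ u hκu hpu
        have h1 := ihx b hbsp (-κ) (-u)
          (by rw [map_neg, hκu, smul_neg])
          (by rw [map_neg, hpu, neg_neg])
        have hneg : (b ⊗ₜ[ℤ] κ : k ⊗[ℤ] K.obj c) = -(b ⊗ₜ[ℤ] (-κ)) := by
          rw [tmul_neg, neg_neg]
        rw [hneg]
        exact neg_mem h1
    exact symspan (p.app c u) (hLgspan g c hga') b' (hBgspan g b' hgb') κ' u hκ'' rfl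
end

section
/- Let k be a commutative noetherian ring and M an abelian group that is noetherian (finitely generated). Then Tor₁^ℤ(M, k) is a finitely generated k-module. -/
open LinearMap TensorProduct

/-- Let `k` be a commutative noetherian ring and `M` a finitely generated (noetherian)
abelian group.  Then `Tor₁^ℤ(M, k)` is a finitely generated `k`-module.  Here `Tor₁^ℤ(M, k)`
is computed from any free presentation `0 → K → F → M → 0` of the abelian group `M` as the
kernel of `k ⊗_ℤ K → k ⊗_ℤ F`. -/
theorem tor_one_finite (k : Type*) [CommRing k] [IsNoetherianRing k]
    (M K F : Type*) [AddCommGroup M] [Module ℤ M] [AddCommGroup K] [Module ℤ K]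
    [AddCommGroup F] [Module ℤ F]
    (hM : Module.Finite ℤ M) (hF : Module.Free ℤ F)
    (i : K →ₗ[ℤ] F) (p : F →ₗ[ℤ] M)
    (hi : Function.Injective i) (hp : Function.Surjective p)
    (hex : LinearMap.ker p = LinearMap.range i) :
    Module.Finite k (LinearMap.ker (LinearMap.baseChange k i)) := by
  haveI := hM
  haveI := hF
  -- finite presentation of M
  obtain ⟨n, π, hπ⟩ := Module.Finite.exists_fin' ℤ M
  set K₀ : Submodule ℤ (Fin n → ℤ) := LinearMap.ker π with hK₀
  let i₀ : K₀ →ₗ[ℤ] (Fin n → ℤ) := K₀.subtype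
  -- lifts
  obtain ⟨s, hs⟩ := Module.projective_lifting_property p π hp
  obtain ⟨s', hs'⟩ := Module.projective_lifting_property π p hπ
  letI : Module ℤ ↥(LinearMap.range i) := (LinearMap.range i).module
  -- e : K ≃ range i
  let e := LinearEquiv.ofInjective i hi
  have he : ∀ y : LinearMap.range i, i (e.symm y) = y := by
    intro y
    conv_rhs => rw [← e.apply_symm_apply y]
    rw [LinearEquiv.ofInjective_apply]
  -- u₀ : K₀ → K with i ∘ u₀ = s ∘ i₀
  have hsi₀ : ∀ κ : K₀, (s ∘ₗ i₀) κ ∈ LinearMap.range i := by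
    intro κ
    rw [← hex, LinearMap.mem_ker]
    have h1 : p (s (i₀ κ)) = π (i₀ κ) := by rw [← LinearMap.comp_apply, hs]
    simp only [LinearMap.comp_apply, h1]
    exact κ.2
  let u₀ : K₀ →ₗ[ℤ] K :=
    e.symm.toLinearMap ∘ₗ ((s ∘ₗ i₀).codRestrict (LinearMap.range i) hsi₀)
  have hu₀ : i ∘ₗ u₀ = s ∘ₗ i₀ := by
    ext κ
    exact he ⟨(s ∘ₗ i₀) κ, hsi₀ κ⟩
  -- u : K → K₀ with i₀ ∘ u = s' ∘ i
  have hsi : ∀ κ : K, (s' ∘ₗ i) κ ∈ K₀ := by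
    intro κ
    rw [hK₀, LinearMap.mem_ker]
    have h1 : π (s' (i κ)) = p (i κ) := by rw [← LinearMap.comp_apply, hs']
    simp only [LinearMap.comp_apply, h1]
    have : i κ ∈ LinearMap.ker p := by rw [hex]; exact ⟨κ, rfl⟩
    exact this
  let u : K →ₗ[ℤ] K₀ := (s' ∘ₗ i).codRestrict K₀ hsi
  have hu : i₀ ∘ₗ u = s' ∘ₗ i := by ext κ; rfl
  -- h : F → K with i ∘ h = s ∘ s' - id
  let d : F →ₗ[ℤ] F := s ∘ₗ s' - LinearMap.id
  have hd : ∀ f : F, d f = s (s' f) - f := fun f => rfl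
  have hss' : ∀ f : F, d f ∈ LinearMap.range i := by
    intro f
    rw [← hex, LinearMap.mem_ker]
    have h1 : p (s (s' f)) = π (s' f) := by rw [← LinearMap.comp_apply, hs]
    have h2 : π (s' f) = p f := by rw [← LinearMap.comp_apply, hs']
    simp [hd, h1, h2]
  let h : F →ₗ[ℤ] K :=
    e.symm.toLinearMap ∘ₗ (d.codRestrict (LinearMap.range i) hss')
  have hh : ∀ f : F, i (h f) = s (s' f) - f := by
    intro f
    have := he ⟨d f, hss' f⟩
    exact this
  -- key identity: u₀ ∘ u = id + h ∘ i
  have key : u₀ ∘ₗ u = LinearMap.id + h ∘ₗ i := by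
    ext κ
    apply hi
    have l1 : i (u₀ (u κ)) = s (i₀ (u κ)) := by
      rw [← LinearMap.comp_apply, hu₀]; rfl
    have l2 : i₀ (u κ) = s' (i κ) := by rw [← LinearMap.comp_apply, hu]; rfl
    have l3 : i (h (i κ)) = s (s' (i κ)) - i κ := hh (i κ)
    simp only [LinearMap.comp_apply, LinearMap.add_apply, LinearMap.id_apply, map_add,
      l1, l2, l3]
    abel
  -- base change computations
  have hbc₀ : (baseChange k i).comp (baseChange k u₀)
      = (baseChange k s).comp (baseChange k i₀) := by
    rw [← LinearMap.baseChange_comp, ← LinearMap.baseChange_comp, hu₀]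
  have hbc : (baseChange k i₀).comp (baseChange k u)
      = (baseChange k s').comp (baseChange k i) := by
    rw [← LinearMap.baseChange_comp, ← LinearMap.baseChange_comp, hu]
  have hbckey : (baseChange k u₀).comp (baseChange k u)
      = LinearMap.id + (baseChange k h).comp (baseChange k i) := by
    rw [← LinearMap.baseChange_comp, key, LinearMap.baseChange_add, LinearMap.baseChange_id,
      LinearMap.baseChange_comp]
  -- the restricted map β
  have hmemβ : ∀ y ∈ LinearMap.ker (baseChange k i₀),
      baseChange k u₀ y ∈ LinearMap.ker (baseChange k i) := by
    intro y hy
    rw [LinearMap.mem_ker] at hy ⊢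
    have := congrArg (fun f => f y) hbc₀
    simp only [LinearMap.comp_apply] at this
    rw [this, hy, map_zero]
  let β : LinearMap.ker (baseChange k i₀) →ₗ[k] LinearMap.ker (baseChange k i) :=
    (baseChange k u₀).restrict hmemβ
  have hβ : Function.Surjective β := by
    rintro ⟨x, hx⟩
    rw [LinearMap.mem_ker] at hx
    have hymem : baseChange k u x ∈ LinearMap.ker (baseChange k i₀) := by
      rw [LinearMap.mem_ker]
      have := congrArg (fun f => f x) hbc
      simp only [LinearMap.comp_apply] at this
      rw [this, hx, map_zero]
    refine ⟨⟨baseChange k u x, hymem⟩, ?_⟩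
    apply Subtype.ext
    show baseChange k u₀ (baseChange k u x) = x
    have := congrArg (fun f => f x) hbckey
    simp only [LinearMap.comp_apply, LinearMap.add_apply, LinearMap.id_apply] at this
    rw [this, hx, map_zero, add_zero]
  -- finiteness of the source
  haveI : Module.Finite ℤ K₀ := Module.Finite.iff_fg.mpr (IsNoetherian.noetherian _)
  haveI : Module.Finite k (k ⊗[ℤ] K₀) := inferInstance
  haveI : IsNoetherian k (k ⊗[ℤ] K₀) := inferInstance
  haveI : Module.Finite k (LinearMap.ker (baseChange k i₀)) :=
    Module.Finite.iff_fg.mpr (IsNoetherian.noetherian _)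
  exact Module.Finite.of_surjective β hβ
end

section
/- For any k-module V and d ∈ ℕ, the k-linear map ⊕ k[V^r] → Γ^d_k(V), with the sum over tuples (i₁,…,i_r) of positive integers with i₁+⋯+i_r = d, sending [v₁,…,v_r] to v₁^[i₁]⋯v_r^[i_r], is surjective. -/
open MvPolynomial

lemma dp_zero_aux (k : Type*) {V : Type*} [CommRing k] [AddCommGroup V] [Module k V] (v : V) :
    dp k v 0 = 1 := by
  have h : (X (v, 0) - 1 : MvPolynomial (V × ℕ) k) ∈ dpRelations k V :=
    Ideal.subset_span (Or.inl (Or.inl (Or.inl ⟨v, rfl⟩)))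
  have h2 : Ideal.Quotient.mk (dpRelations k V) (X (v, 0) - 1) = 0 :=
    (Ideal.Quotient.eq_zero_iff_mem).mpr h
  rw [map_sub, map_one, sub_eq_zero] at h2
  exact h2

/-- For any `k`-module `V` and `d ∈ ℕ`, the map `⊕ k[V^r] → Γ^d_k(V)` (sum over tuples
`(i₁,…,i_r)` of **positive** integers with `i₁+⋯+i_r = d`) sending `[v₁,…,v_r]` to
`v₁^[i₁]⋯v_r^[i_r]` is surjective: `Γ^d_k(V)` is spanned by such products. -/
theorem gammaDP_spanned_by_positive_products
    (k V : Type*) [CommRing k] [AddCommGroup V] [Module k V] (d : ℕ) :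
    Submodule.span k {x : DividedPowerAlg k V |
        ∃ (r : ℕ) (f : Fin r → V) (g : Fin r → ℕ),
          (∀ a, 0 < g a) ∧ (∑ a, g a) = d ∧ x = ∏ a, dp k (f a) (g a)} =
      gammaDP k V d := by
  classical
  apply le_antisymm
  · apply Submodule.span_mono
    rintro x ⟨r, f, g, _, hsum, hx⟩
    exact ⟨r, f, g, hsum, hx⟩
  · rw [gammaDP]
    apply Submodule.span_le.mpr
    rintro x ⟨r, f, g, hsum, hx⟩
    apply Submodule.subset_span
    set s := Finset.univ.filter (fun a : Fin r => 0 < g a) with hs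
    let e : Fin s.card ≃ {a // a ∈ s} := s.equivFin.symm
    have hzero : ∀ a ∈ Finset.univ, a ∉ s → g a = 0 := by
      intro a _ ha
      simpa [hs, Nat.pos_iff_ne_zero] using ha
    refine ⟨s.card, fun i => f (e i), fun i => g (e i), fun i => ?_, ?_, ?_⟩
    · have := (e i).2
      simp only [hs, Finset.mem_filter] at this
      exact this.2
    · rw [← hsum]
      rw [Fintype.sum_equiv e (fun i => g (e i)) (fun a : {a // a ∈ s} => g a) (fun i => rfl)]
      rw [Finset.sum_coe_sort s g]
      exact Finset.sum_subset (Finset.subset_univ s) hzero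
    · rw [hx]
      rw [Fintype.prod_equiv e (fun i => dp k (f (e i)) (g (e i)))
        (fun a : {a // a ∈ s} => dp k (f a) (g a)) (fun i => rfl)]
      rw [Finset.prod_coe_sort s (fun a => dp k (f a) (g a))]
      refine (Finset.prod_subset (Finset.subset_univ s) ?_).symm
      intro a _ ha
      rw [hzero a (Finset.mem_univ a) ha, dp_zero_aux]
end
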